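/- arXiv:2412.10197 — 6 statements merged into one kernel-verified Lean document; each statement's English description precedes it below -/
import Mathlib

section
/- Let S be an n×n nonzero real symmetric matrix with spectral radius ρ, and let μ_ρ and μ_{-ρ} denote the algebraic multiplicities of ρ and -ρ as eigenvalues of S (possibly zero). Then there exists a real symmetric matrix Ŝ of order 2n - μ_ρ - μ_{-ρ} such that S is a principal submatrix of Ŝ and Ŝᵀ Ŝ = ρ² I. -/
open Matrix Polynomial

/-- `S` is a principal submatrix of `Q`. -/
def IsPrincipalSubmatrix {m n : ℕ} (S : Matrix (Fin m) (Fin m) ℝ)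
    (Q : Matrix (Fin n) (Fin n) ℝ) : Prop :=
  ∃ f : Fin m → Fin n, StrictMono f ∧ ∀ i j, S i j = Q (f i) (f j)

/-- `Q` is quasi-orthogonal: `Qᵀ * Q = q • 1` for some `q > 0`. -/
def IsQuasiOrthogonal {n : ℕ} (Q : Matrix (Fin n) (Fin n) ℝ) : Prop :=
  ∃ q : ℝ, 0 < q ∧ Qᵀ * Q = q • (1 : Matrix (Fin n) (Fin n) ℝ)

/-- algebraic multiplicity of `lam` as an eigenvalue of `S` (0 if not a root). -/
noncomputable def eigMult {n : ℕ} (S : Matrix (Fin n) (Fin n) ℝ) (lam : ℝ) : ℕ :=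
  (Matrix.charpoly S).rootMultiplicity lam

/-- `ρ` is the spectral radius of the real matrix `S`. -/
def IsSpectralRadius {n : ℕ} (S : Matrix (Fin n) (Fin n) ℝ) (ρ : ℝ) : Prop :=
  ((Matrix.charpoly S).IsRoot ρ ∨ (Matrix.charpoly S).IsRoot (-ρ)) ∧
    ∀ lam : ℝ, (Matrix.charpoly S).IsRoot lam → |lam| ≤ ρ

/-- quasi-orthogonality index: least `d` such that `S` is a principal submatrix of a
symmetric quasi-orthogonal matrix of order `n + d`. -/
noncomputable def qIndex {n : ℕ} (S : Matrix (Fin n) (Fin n) ℝ) : ℕ :=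
  sInf {d : ℕ | ∃ Q : Matrix (Fin (n + d)) (Fin (n + d)) ℝ,
    Q.IsSymm ∧ IsQuasiOrthogonal Q ∧ IsPrincipalSubmatrix S Q}

/-- symmetric Seidel matrix: zero diagonal, off-diagonal entries `±1`. -/
def IsSeidel {n : ℕ} (S : Matrix (Fin n) (Fin n) ℝ) : Prop :=
  S.IsSymm ∧ (∀ i, S i i = 0) ∧ ∀ i j, i ≠ j → S i j = 1 ∨ S i j = -1


lemma charpoly_conj_aux {n : Type*} [Fintype n] [DecidableEq n] {R : Type*} [CommRing R]
    (U V M : Matrix n n R) (hUV : U * V = 1) :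
    (U * M * V).charpoly = M.charpoly := by
  have h1 : U.map C * V.map C = 1 := by
    rw [← Matrix.map_mul, hUV, Matrix.map_one _ (map_zero C) (map_one C)]
  have hdet : (U.map C).det * (V.map C).det = 1 := by rw [← det_mul, h1, det_one]
  have hs : ∀ (A : Matrix n n R[X]), A * Matrix.scalar n X = Matrix.scalar n X * A := by
    intro A; ext i j
    simp [scalar_apply, mul_diagonal, diagonal_mul, mul_comm]
  have hcm : charmatrix (U * M * V) = U.map C * charmatrix M * V.map C := by
    rw [charmatrix, charmatrix]
    simp only [RingHom.mapMatrix_apply, Matrix.map_mul]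
    rw [mul_sub, sub_mul]
    congr 1
    rw [mul_assoc, ← hs, ← mul_assoc, h1, one_mul]
  rw [Matrix.charpoly, Matrix.charpoly, hcm, det_mul, det_mul, mul_comm ((U.map C).det) _,
    mul_assoc, hdet, mul_one]

lemma charpoly_diagonal {n : Type*} [Fintype n] [DecidableEq n] {R : Type*} [CommRing R]
    (d : n → R) : (Matrix.diagonal d).charpoly = ∏ i, (X - C (d i)) := by
  have : charmatrix (Matrix.diagonal d) = Matrix.diagonal (fun i => X - C (d i)) := by
    ext i j
    by_cases h : i = j
    · subst h; simp [charmatrix_apply_eq]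
    · simp [charmatrix_apply_ne _ _ _ h, Matrix.diagonal_apply_ne _ h]
  rw [Matrix.charpoly, this, det_diagonal]

lemma charpoly_herm {n : ℕ} {S : Matrix (Fin n) (Fin n) ℝ} (hA : S.IsHermitian) :
    S.charpoly = ∏ i, (X - C (hA.eigenvalues i)) := by
  set U : Matrix (Fin n) (Fin n) ℝ := (hA.eigenvectorUnitary : Matrix (Fin n) (Fin n) ℝ) with hU
  have hUV : U * star U = 1 := (Matrix.mem_unitaryGroup_iff).mp (hA.eigenvectorUnitary).2
  have hspec := hA.spectral_theorem
  rw [RCLike.ofReal_real_eq_id, Function.id_comp] at hspec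
  calc S.charpoly = (U * Matrix.diagonal hA.eigenvalues * star U).charpoly := by
        have h : S = U * Matrix.diagonal hA.eigenvalues * star U := hspec
        rw [← h]
    _ = (Matrix.diagonal hA.eigenvalues).charpoly := charpoly_conj_aux _ _ _ hUV
    _ = ∏ i, (X - C (hA.eigenvalues i)) := _root_.charpoly_diagonal _

lemma eigMult_eq_card {n : ℕ} {S : Matrix (Fin n) (Fin n) ℝ} (hA : S.IsHermitian) (lam : ℝ) :
    S.charpoly.rootMultiplicity lam
      = (Finset.univ.filter (fun i => hA.eigenvalues i = lam)).card := by
  classical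
  rw [← Polynomial.count_roots, charpoly_herm hA]
  have : (∏ i, (X - C (hA.eigenvalues i)))
      = ((Finset.univ.val.map hA.eigenvalues).map (fun a => X - C a)).prod := by
    rw [Multiset.map_map]; rfl
  rw [this, Polynomial.roots_multiset_prod_X_sub_C, Multiset.count_map]
  rw [Finset.card, Finset.filter_val]
  congr 1
  apply Multiset.filter_congr
  intro x _
  exact eq_comm

theorem stmt0 {n : ℕ} (S : Matrix (Fin n) (Fin n) ℝ) (hsymm : S.IsSymm) (hS0 : S ≠ 0)
    (ρ : ℝ) (hρ : IsSpectralRadius S ρ) :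
    ∃ Shat : Matrix (Fin (2 * n - eigMult S ρ - eigMult S (-ρ)))
      (Fin (2 * n - eigMult S ρ - eigMult S (-ρ))) ℝ,
      Shat.IsSymm ∧ IsPrincipalSubmatrix S Shat ∧
      Shatᵀ * Shat = (ρ ^ 2) • (1 : Matrix (Fin (2 * n - eigMult S ρ - eigMult S (-ρ)))
        (Fin (2 * n - eigMult S ρ - eigMult S (-ρ))) ℝ) := by
  classical
  have hA : S.IsHermitian := by
    rw [Matrix.IsHermitian, Matrix.conjTranspose_eq_transpose_of_trivial]; exact hsymm
  set ev : Fin n → ℝ := hA.eigenvalues with hev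
  set U : Matrix (Fin n) (Fin n) ℝ := (hA.eigenvectorUnitary : Matrix (Fin n) (Fin n) ℝ)
    with hUdef
  set V : Matrix (Fin n) (Fin n) ℝ := star U with hVdef
  have hUV : U * V = 1 := (Matrix.mem_unitaryGroup_iff).mp hA.eigenvectorUnitary.2
  have hVU : V * U = 1 := (Matrix.mem_unitaryGroup_iff').mp hA.eigenvectorUnitary.2
  have hVt : V = Uᵀ := by
    rw [hVdef, Matrix.star_eq_conjTranspose, Matrix.conjTranspose_eq_transpose_of_trivial]
  set D : Matrix (Fin n) (Fin n) ℝ := Matrix.diagonal ev with hDdef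
  have hspec : S = U * D * V := by
    have := hA.spectral_theorem
    rwa [RCLike.ofReal_real_eq_id, Function.id_comp] at this
  have hroot : ∀ i, S.charpoly.IsRoot (ev i) := by
    intro i
    rw [charpoly_herm hA, Polynomial.IsRoot.def, Polynomial.eval_prod]
    exact Finset.prod_eq_zero (Finset.mem_univ i) (by simp [hev])
  have hbound : ∀ i, |ev i| ≤ ρ := fun i => hρ.2 _ (hroot i)
  have hρ0 : 0 ≤ ρ := by
    rcases hρ.1 with h | h
    · exact le_trans (abs_nonneg ρ) (hρ.2 ρ h)
    · exact le_trans (abs_nonneg (-ρ)) (hρ.2 (-ρ) h)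
  have hρpos : 0 < ρ := by
    rcases eq_or_lt_of_le hρ0 with h | h
    · exfalso; apply hS0
      have hall : ∀ i, ev i = 0 := fun i =>
        abs_eq_zero.mp (le_antisymm (h ▸ hbound i) (abs_nonneg _))
      have hD0 : D = 0 := by
        rw [hDdef]; ext i j
        by_cases hij : i = j
        · subst hij; simp [hall i]
        · simp [Matrix.diagonal_apply_ne _ hij]
      rw [hspec, hD0, Matrix.mul_zero, Matrix.zero_mul]
    · exact h
  -- the index set of small eigenvalues
  set k : ℕ := Fintype.card {i : Fin n // |ev i| < ρ} with hk
  set e : Fin k → Fin n := fun j => ((Fintype.equivFin {i : Fin n // |ev i| < ρ}).symm j).1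
    with hedef
  have he_inj : Function.Injective e := by
    intro a b hab
    have := Subtype.ext hab
    exact (Fintype.equivFin {i : Fin n // |ev i| < ρ}).symm.injective this
  have he_lt : ∀ j, |ev (e j)| < ρ := fun j =>
    ((Fintype.equivFin {i : Fin n // |ev i| < ρ}).symm j).2
  have he_surj : ∀ i, |ev i| < ρ → ∃ j, e j = i := fun i hi =>
    ⟨(Fintype.equivFin {i : Fin n // |ev i| < ρ}) ⟨i, hi⟩, by simp [hedef]⟩
  -- dimension count
  have hcard : n = (Finset.univ.filter (fun i => ev i = ρ)).card
      + (Finset.univ.filter (fun i => ev i = -ρ)).card + k := by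
    have hk' : k = (Finset.univ.filter (fun i : Fin n => |ev i| < ρ)).card := by
      rw [hk, Fintype.card_subtype]
    have hsplit := Finset.card_filter_add_card_filter_not
      (s := (Finset.univ : Finset (Fin n))) (p := fun i : Fin n => |ev i| < ρ)
    have hnot : Finset.univ.filter (fun i : Fin n => ¬ |ev i| < ρ)
        = Finset.univ.filter (fun i : Fin n => ev i = ρ)
          ∪ Finset.univ.filter (fun i : Fin n => ev i = -ρ) := by
      rw [← Finset.filter_or]
      apply Finset.filter_congr
      intro i _
      constructor
      · intro h
        have habs : |ev i| = ρ := le_antisymm (hbound i) (not_lt.mp h)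
        exact (abs_eq hρ0).mp habs
      · rintro (h | h)
        · rw [h, abs_of_nonneg hρ0]; exact lt_irrefl ρ
        · rw [h, abs_neg, abs_of_nonneg hρ0]; exact lt_irrefl ρ
    have hdisj : Disjoint (Finset.univ.filter (fun i : Fin n => ev i = ρ))
        (Finset.univ.filter (fun i : Fin n => ev i = -ρ)) := by
      rw [Finset.disjoint_left]
      intro i hi1 hi2
      have h1 := (Finset.mem_filter.mp hi1).2
      have h2 := (Finset.mem_filter.mp hi2).2
      rw [h1] at h2
      linarith
    have hcardsum := Finset.card_union_of_disjoint hdisj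
    rw [hnot, hcardsum] at hsplit
    have hn : (Finset.univ : Finset (Fin n)).card = n := by
      rw [Finset.card_univ, Fintype.card_fin]
    omega
  have hN : 2 * n - eigMult S ρ - eigMult S (-ρ) = n + k := by
    rw [eigMult, eigMult, eigMult_eq_card hA, eigMult_eq_card hA, ← hev]
    omega
  rw [hN]
  -- the construction
  set c : Fin n → ℝ := fun i => Real.sqrt (ρ ^ 2 - ev i ^ 2) with hcdef
  have hsq : ∀ i, ev i ^ 2 ≤ ρ ^ 2 := by
    intro i
    have := pow_le_pow_left₀ (abs_nonneg (ev i)) (hbound i) 2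
    rwa [sq_abs] at this
  have hc : ∀ i, c i ^ 2 = ρ ^ 2 - ev i ^ 2 := fun i =>
    Real.sq_sqrt (by linarith [hsq i])
  set P0 : Matrix (Fin n) (Fin k) ℝ := Matrix.of (fun i j => if i = e j then c i else 0)
    with hP0def
  set B : Matrix (Fin n) (Fin k) ℝ := U * P0 with hBdef
  set E : Matrix (Fin k) (Fin k) ℝ := Matrix.diagonal (fun j => - ev (e j)) with hEdef
  set M : Matrix (Fin n ⊕ Fin k) (Fin n ⊕ Fin k) ℝ := Matrix.fromBlocks S B Bᵀ E with hMdef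
  have hMsymm : Mᵀ = M := by
    rw [hMdef, Matrix.fromBlocks_transpose, hsymm, Matrix.transpose_transpose, hEdef,
      Matrix.diagonal_transpose]
  -- block identities
  have hP1 : P0 * P0ᵀ = Matrix.diagonal (fun i => ρ ^ 2 - ev i ^ 2) := by
    ext i i'
    rw [Matrix.mul_apply]
    simp only [hP0def, Matrix.transpose_apply, Matrix.of_apply]
    by_cases hii : i = i'
    · subst hii
      rw [Matrix.diagonal_apply_eq]
      by_cases hlt : |ev i| < ρ
      · obtain ⟨j0, hj0⟩ := he_surj i hlt
        rw [Finset.sum_eq_single j0 (fun j _ hjj => by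
            rw [if_neg (fun h => hjj (he_inj (h.symm.trans hj0.symm))), zero_mul])
          (fun h => absurd (Finset.mem_univ j0) h)]
        rw [if_pos hj0.symm, ← pow_two, hc]
      · have habs : |ev i| = ρ := le_antisymm (hbound i) (not_lt.mp hlt)
        have h2 : ev i ^ 2 = ρ ^ 2 := by rw [← sq_abs, habs]
        rw [Finset.sum_eq_zero (fun j _ => by
          rw [if_neg (fun h => hlt (by rw [h]; exact he_lt j)), zero_mul]), h2, sub_self]
    · rw [Matrix.diagonal_apply_ne _ hii]
      apply Finset.sum_eq_zero
      intro j _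
      by_cases h1 : i = e j
      · rw [if_neg (show ¬ i' = e j from fun h2 => hii (h1.trans h2.symm)), mul_zero]
      · rw [if_neg h1, zero_mul]
  have hP2 : P0ᵀ * P0 = Matrix.diagonal (fun j => ρ ^ 2 - ev (e j) ^ 2) := by
    ext j j'
    rw [Matrix.mul_apply]
    simp only [hP0def, Matrix.transpose_apply, Matrix.of_apply]
    by_cases hjj : j = j'
    · subst hjj
      rw [Matrix.diagonal_apply_eq]
      rw [Finset.sum_eq_single (e j) (fun i _ hne => by rw [if_neg hne, zero_mul])
        (fun h => absurd (Finset.mem_univ _) h)]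
      rw [if_pos rfl, ← pow_two, hc]
    · rw [Matrix.diagonal_apply_ne _ hjj]
      apply Finset.sum_eq_zero
      intro i _
      by_cases h1 : i = e j
      · rw [if_neg (fun h2 : i = e j' => hjj (he_inj ((h1.symm.trans h2)))), mul_zero]
      · rw [if_neg h1, zero_mul]
  have hDP : D * P0 + P0 * E = 0 := by
    ext i j
    simp only [Matrix.add_apply, hDdef, hEdef, hP0def, Matrix.diagonal_mul,
      Matrix.mul_diagonal, Matrix.of_apply, Matrix.zero_apply]
    by_cases h : i = e j
    · rw [h]; ring
    · simp [h]
  -- associativity helpers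
  have assoc1 : ∀ (A A' : Matrix (Fin n) (Fin n) ℝ),
      (U * A * V) * (U * A' * V) = U * (A * A') * V := by
    intro A A'
    simp only [mul_assoc]
    rw [← mul_assoc V U, hVU, one_mul]
  have assoc2 : ∀ (A : Matrix (Fin n) (Fin n) ℝ) (Q : Matrix (Fin n) (Fin k) ℝ),
      (U * A * V) * (U * Q) = U * (A * Q) := by
    intro A Q
    rw [Matrix.mul_assoc (U * A) V (U * Q), ← Matrix.mul_assoc V U Q, hVU, Matrix.one_mul,
      Matrix.mul_assoc]
  have hBt : Bᵀ = P0ᵀ * V := by rw [hBdef, Matrix.transpose_mul, hVt]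
  have block1 : S * S + B * Bᵀ = (ρ ^ 2) • (1 : Matrix (Fin n) (Fin n) ℝ) := by
    rw [hspec, assoc1, hBdef, hBt]
    have : U * P0 * (P0ᵀ * V) = U * (P0 * P0ᵀ) * V := by
      rw [← Matrix.mul_assoc (U * P0) P0ᵀ V, Matrix.mul_assoc U P0 P0ᵀ]
    rw [this, ← Matrix.add_mul, ← Matrix.mul_add, hP1]
    have hDD : D * D + Matrix.diagonal (fun i => ρ ^ 2 - ev i ^ 2)
        = (ρ ^ 2) • (1 : Matrix (Fin n) (Fin n) ℝ) := by
      rw [hDdef, Matrix.diagonal_mul_diagonal, Matrix.diagonal_add]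
      ext i j
      by_cases h : i = j
      · subst h; simp; ring
      · simp [Matrix.diagonal_apply_ne _ h, Matrix.one_apply_ne h]
    rw [hDD, Matrix.mul_smul, Matrix.smul_mul, Matrix.mul_one, hUV]
  have block2 : S * B + B * E = 0 := by
    rw [hspec, hBdef, assoc2, Matrix.mul_assoc U P0 E, ← Matrix.mul_add, hDP, Matrix.mul_zero]
  have hSt : Sᵀ = S := hsymm
  have hEsym : Eᵀ = E := by rw [hEdef]; exact Matrix.diagonal_transpose _
  have block3 : Bᵀ * S + E * Bᵀ = 0 := by
    have h := congrArg Matrix.transpose block2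
    simp only [Matrix.transpose_add, Matrix.transpose_mul, Matrix.transpose_zero, hSt, hEsym] at h
    exact h
  have block4 : Bᵀ * B + E * E = (ρ ^ 2) • (1 : Matrix (Fin k) (Fin k) ℝ) := by
    rw [hBt, hBdef]
    have : P0ᵀ * V * (U * P0) = P0ᵀ * P0 := by
      rw [Matrix.mul_assoc P0ᵀ V (U * P0), ← Matrix.mul_assoc V U P0, hVU, Matrix.one_mul]
    rw [this, hP2, hEdef, Matrix.diagonal_mul_diagonal, Matrix.diagonal_add]
    ext j j'
    by_cases h : j = j'
    · subst h
      simp only [Matrix.diagonal_apply_eq, Matrix.smul_apply, Matrix.one_apply_eq, smul_eq_mul,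
        mul_one]
      ring
    · simp [Matrix.diagonal_apply_ne _ h, Matrix.one_apply_ne h]
  have hMM : M * M = (ρ ^ 2) • (1 : Matrix (Fin n ⊕ Fin k) (Fin n ⊕ Fin k) ℝ) := by
    rw [hMdef, Matrix.fromBlocks_multiply, block1, block2, block3, block4,
      ← Matrix.fromBlocks_one, Matrix.fromBlocks_smul]
    simp
  refine ⟨M.submatrix finSumFinEquiv.symm finSumFinEquiv.symm, ?_, ?_, ?_⟩
  · rw [Matrix.IsSymm, Matrix.transpose_submatrix, hMsymm]
  · refine ⟨Fin.castAdd k, Fin.strictMono_castAdd k, fun i j => ?_⟩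
    simp [hMdef]
  · have hsub : (M.submatrix finSumFinEquiv.symm finSumFinEquiv.symm)ᵀ
        = M.submatrix finSumFinEquiv.symm finSumFinEquiv.symm := by
      rw [Matrix.transpose_submatrix, hMsymm]
    rw [hsub, Matrix.submatrix_mul_equiv M M _ finSumFinEquiv.symm _, hMM]
    simp [Matrix.submatrix_smul, Matrix.submatrix_one_equiv]
end

section
/- Let S be an m×m real symmetric matrix with spectral radius ρ, and let Ŝ be a symmetric quasi-orthogonal extension of S of order n ≥ 2 with spectral radius ρ̂. If n - m ≤ (n-1)/2, then ρ̂ = ρ and n ≥ 2m - (μ_ρ(S) + μ_{-ρ}(S)). -/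
open Matrix Polynomial

lemma myMapOne {k : ℕ} : (1 : Matrix (Fin k) (Fin k) ℝ).map (C : ℝ →+* ℝ[X]) = 1 :=
  Matrix.map_one _ (map_zero C) (map_one C)

lemma myCharpolyConj {k : ℕ} (U A : Matrix (Fin k) (Fin k) ℝ)
    (h1 : U * star U = 1) (h2 : star U * U = 1) :
    (U * A * star U).charpoly = A.charpoly := by
  have hchar : charmatrix (U * A * star U)
      = U.map (C : ℝ →+* ℝ[X]) * charmatrix A * (star U).map (C : ℝ →+* ℝ[X]) := by
    rw [charmatrix, charmatrix, mul_sub, sub_mul]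
    congr 1
    · have hcomm : U.map (C : ℝ →+* ℝ[X]) * Matrix.scalar (Fin k) (X : ℝ[X])
          = Matrix.scalar (Fin k) (X : ℝ[X]) * U.map (C : ℝ →+* ℝ[X]) :=
        (scalar_commute (X : ℝ[X]) (fun r => Commute.all _ _) _).symm
      rw [hcomm, mul_assoc, ← Matrix.map_mul, h1, myMapOne, mul_one]
    · simp only [RingHom.mapMatrix_apply, Matrix.map_mul]
  rw [Matrix.charpoly, Matrix.charpoly, hchar, det_mul, det_mul, mul_comm, ← mul_assoc,
    ← det_mul, ← Matrix.map_mul, h2, myMapOne, det_one, one_mul]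

lemma myCharpolyHerm {k : ℕ} {A : Matrix (Fin k) (Fin k) ℝ} (hA : A.IsHermitian) :
    A.charpoly = ∏ i, (X - C (hA.eigenvalues i)) := by
  have h1 : (hA.eigenvectorUnitary : Matrix (Fin k) (Fin k) ℝ)
      * star (hA.eigenvectorUnitary : Matrix (Fin k) (Fin k) ℝ) = 1 :=
    (Matrix.mem_unitaryGroup_iff).mp (hA.eigenvectorUnitary).2
  have h2 : star (hA.eigenvectorUnitary : Matrix (Fin k) (Fin k) ℝ)
      * (hA.eigenvectorUnitary : Matrix (Fin k) (Fin k) ℝ) = 1 :=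
    (Matrix.mem_unitaryGroup_iff').mp (hA.eigenvectorUnitary).2
  have hd : (RCLike.ofReal ∘ hA.eigenvalues : Fin k → ℝ) = hA.eigenvalues := by
    ext i; simp
  conv_lhs => rw [hA.spectral_theorem]
  rw [Unitary.conjStarAlgAut_apply, myCharpolyConj _ _ h1 h2, hd, charpoly_of_upperTriangular _ (blockTriangular_diagonal _)]
  simp

lemma myRankSub {k : ℕ} {A : Matrix (Fin k) (Fin k) ℝ} (hA : A.IsHermitian) (t : ℝ) :
    (A - t • 1).rank = Fintype.card {i // hA.eigenvalues i ≠ t} := by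
  set U := (hA.eigenvectorUnitary : Matrix (Fin k) (Fin k) ℝ) with hU
  have h1 : U * star U = 1 := (Matrix.mem_unitaryGroup_iff).mp (hA.eigenvectorUnitary).2
  have h2 : star U * U = 1 := (Matrix.mem_unitaryGroup_iff').mp (hA.eigenvectorUnitary).2
  have hdetU : IsUnit U.det ∧ IsUnit (star U).det := by
    constructor
    · exact IsUnit.of_mul_eq_one _ (by rw [← det_mul, h1, det_one])
    · exact IsUnit.of_mul_eq_one _ (by rw [← det_mul, h2, det_one])
  have hd : (RCLike.ofReal ∘ hA.eigenvalues : Fin k → ℝ) = hA.eigenvalues := by ext i; simp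
  have hst : t • (1 : Matrix (Fin k) (Fin k) ℝ) = U * (diagonal fun _ => t) * star U := by
    have hdg : (diagonal fun _ : Fin k => t) = t • (1 : Matrix (Fin k) (Fin k) ℝ) := by
      ext i j
      by_cases h : i = j <;> simp [h, Matrix.one_apply, Matrix.diagonal_apply]
    rw [hdg, Matrix.mul_smul, Matrix.smul_mul, mul_one, h1]
  have key : A - t • 1 = U * (diagonal fun i => hA.eigenvalues i - t) * star U := by
    conv_lhs => rw [hA.spectral_theorem, hst]
    rw [Unitary.conjStarAlgAut_apply, hd, ← sub_mul, ← Matrix.mul_sub, diagonal_sub]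
  rw [key, rank_mul_eq_left_of_isUnit_det _ _ hdetU.2, rank_mul_eq_right_of_isUnit_det _ _ hdetU.1,
    rank_diagonal]
  exact Fintype.card_congr (Equiv.subtypeEquivRight fun i => by rw [sub_ne_zero])

lemma myEigMultCard {k : ℕ} {A : Matrix (Fin k) (Fin k) ℝ} (hA : A.IsHermitian) (t : ℝ) :
    (Matrix.charpoly A).rootMultiplicity t = Fintype.card {i // hA.eigenvalues i = t} := by
  rw [← Polynomial.count_roots, myCharpolyHerm hA]
  have : (∏ i, (X - C (hA.eigenvalues i)))
      = ((Finset.univ.val.map hA.eigenvalues).map fun a => X - C a).prod := by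
    rw [Multiset.map_map]; rfl
  rw [this, roots_multiset_prod_X_sub_C, Multiset.count_map]
  rw [Fintype.card_subtype]
  have : (Finset.filter (fun i => hA.eigenvalues i = t) Finset.univ).card
      = (Finset.filter (fun i => t = hA.eigenvalues i) Finset.univ).card := by
    congr 1; ext i; simp [eq_comm]
  rw [this]
  rfl

lemma myRankAddMult {k : ℕ} {A : Matrix (Fin k) (Fin k) ℝ} (hA : A.IsHermitian) (t : ℝ) :
    (A - t • 1).rank + (Matrix.charpoly A).rootMultiplicity t = k := by
  have h1 : Fintype.card {i // ¬ hA.eigenvalues i = t}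
      = Fintype.card (Fin k) - Fintype.card {i // hA.eigenvalues i = t} :=
    Fintype.card_subtype_compl _
  have h2 : Fintype.card {i // hA.eigenvalues i = t} ≤ Fintype.card (Fin k) :=
    Fintype.card_subtype_le _
  rw [myRankSub hA t, myEigMultCard hA t]
  simp only [Fintype.card_fin, Ne] at *
  omega

lemma myRootIff {k : ℕ} {A : Matrix (Fin k) (Fin k) ℝ} (hA : A.IsHermitian) (t : ℝ) :
    (Matrix.charpoly A).IsRoot t ↔ ∃ i, hA.eigenvalues i = t := by
  rw [myCharpolyHerm hA]
  simp only [Polynomial.IsRoot, Polynomial.eval_prod, Polynomial.eval_sub, Polynomial.eval_X,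
    Polynomial.eval_C, Finset.prod_eq_zero_iff, Finset.mem_univ, true_and, sub_eq_zero]
  exact ⟨fun ⟨i, h⟩ => ⟨i, h.symm⟩, fun ⟨i, h⟩ => ⟨i, h.symm⟩⟩

lemma myEigSq {k : ℕ} {A : Matrix (Fin k) (Fin k) ℝ} (hA : A.IsHermitian) {q : ℝ}
    (h : A * A = q • 1) (i : Fin k) : hA.eigenvalues i ^ 2 = q := by
  set v := ⇑(hA.eigenvectorBasis i) with hvdef
  have hv := hA.mulVec_eigenvectorBasis i
  have hvne : v ≠ 0 := by
    intro hz
    exact hA.eigenvectorBasis.orthonormal.ne_zero i (by ext x; exact congrFun hz x)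
  have h2 : (A * A) *ᵥ v = (hA.eigenvalues i ^ 2) • v := by
    rw [← mulVec_mulVec, hv, mulVec_smul, hv, smul_smul, sq]
  rw [h, smul_mulVec, one_mulVec] at h2
  have h3 : (hA.eigenvalues i ^ 2 - q) • v = 0 := by rw [sub_smul, h2, sub_self]
  rcases smul_eq_zero.mp h3 with h4 | h4
  · linarith [sub_eq_zero.mp (by linarith [h4] : hA.eigenvalues i ^ 2 - q = 0)]
  · exact absurd h4 hvne

lemma myDot {m n : ℕ} (P : Matrix (Fin m) (Fin n) ℝ) (v : Fin m → ℝ) (u : Fin n → ℝ) :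
    (Pᵀ *ᵥ v) ⬝ᵥ u = v ⬝ᵥ (P *ᵥ u) := by
  rw [mulVec_transpose, ← dotProduct_mulVec]

lemma myCS {n : ℕ} (w u : Fin n → ℝ) : (w ⬝ᵥ u)^2 ≤ (w ⬝ᵥ w) * (u ⬝ᵥ u) := by
  have := Finset.sum_mul_sq_le_sq_mul_sq Finset.univ w u
  simpa [dotProduct, sq] using this

lemma myPmul {m n : ℕ} (A : Matrix (Fin n) (Fin n) ℝ) (f : Fin m → Fin n)
    (hf : Function.Injective f) :
    (Matrix.of fun (i : Fin m) (x : Fin n) => if f i = x then (1:ℝ) else 0) * A *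
      (Matrix.of fun (i : Fin m) (x : Fin n) => if f i = x then (1:ℝ) else 0)ᵀ
      = A.submatrix f f := by
  ext i j
  simp [Matrix.mul_apply, Finset.sum_ite_eq, ite_mul, mul_ite]

lemma myPPt {m n : ℕ} (f : Fin m → Fin n) (hf : Function.Injective f) :
    (Matrix.of fun (i : Fin m) (x : Fin n) => if f i = x then (1:ℝ) else 0) *
      (Matrix.of fun (i : Fin m) (x : Fin n) => if f i = x then (1:ℝ) else 0)ᵀ = 1 := by
  have := myPmul (1 : Matrix (Fin n) (Fin n) ℝ) f hf
  rw [Matrix.mul_one] at this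
  rw [this]
  ext i j
  simp [Matrix.one_apply, hf.eq_iff]

lemma myRankSubmatrixLe {m n : ℕ} (A : Matrix (Fin n) (Fin n) ℝ) (f : Fin m → Fin n)
    (hf : Function.Injective f) : (A.submatrix f f).rank ≤ A.rank := by
  rw [← myPmul A f hf]
  exact (rank_mul_le_left _ _).trans (rank_mul_le_right _ _)

lemma myRayleigh {m n : ℕ} (S : Matrix (Fin m) (Fin m) ℝ) (Shat : Matrix (Fin n) (Fin n) ℝ)
    (f : Fin m → Fin n) (hfinj : Function.Injective f) (hSsub : S = Shat.submatrix f f)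
    {q : ℝ} (hqE : Shatᵀ * Shat = q • 1)
    {e : ℝ} {v : Fin m → ℝ} (hv : S *ᵥ v = e • v) (hvne : v ≠ 0) : e ^ 2 ≤ q := by
  have ha0 : 0 < v ⬝ᵥ v := by
    rcases lt_or_eq_of_le (Finset.sum_nonneg fun i _ => mul_self_nonneg (v i)) with h | h
    · exact h
    · exact absurd (dotProduct_self_eq_zero.mp h.symm) hvne
  have hww : ((Matrix.of fun (i : Fin m) (x : Fin n) => if f i = x then (1:ℝ) else 0)ᵀ *ᵥ v) ⬝ᵥ
      ((Matrix.of fun (i : Fin m) (x : Fin n) => if f i = x then (1:ℝ) else 0)ᵀ *ᵥ v)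
      = v ⬝ᵥ v := by
    rw [myDot, mulVec_mulVec, myPPt f hfinj, one_mulVec]
  have hwSw : ((Matrix.of fun (i : Fin m) (x : Fin n) => if f i = x then (1:ℝ) else 0)ᵀ *ᵥ v) ⬝ᵥ
      (Shat *ᵥ ((Matrix.of fun (i : Fin m) (x : Fin n) => if f i = x then (1:ℝ) else 0)ᵀ *ᵥ v))
      = e * (v ⬝ᵥ v) := by
    rw [myDot, mulVec_mulVec, mulVec_mulVec, myPmul Shat f hfinj, ← hSsub, hv,
      dotProduct_smul, smul_eq_mul]
  have huu : (Shat *ᵥ ((Matrix.of fun (i : Fin m) (x : Fin n) =>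
        if f i = x then (1:ℝ) else 0)ᵀ *ᵥ v)) ⬝ᵥ
      (Shat *ᵥ ((Matrix.of fun (i : Fin m) (x : Fin n) => if f i = x then (1:ℝ) else 0)ᵀ *ᵥ v))
      = q * (v ⬝ᵥ v) := by
    have h2 := myDot Shatᵀ
      ((Matrix.of fun (i : Fin m) (x : Fin n) => if f i = x then (1:ℝ) else 0)ᵀ *ᵥ v)
      (Shat *ᵥ ((Matrix.of fun (i : Fin m) (x : Fin n) => if f i = x then (1:ℝ) else 0)ᵀ *ᵥ v))
    rw [transpose_transpose] at h2
    rw [h2, mulVec_mulVec, hqE, smul_mulVec, one_mulVec, dotProduct_smul, smul_eq_mul, hww]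
  have hCS := myCS
    ((Matrix.of fun (i : Fin m) (x : Fin n) => if f i = x then (1:ℝ) else 0)ᵀ *ᵥ v)
    (Shat *ᵥ ((Matrix.of fun (i : Fin m) (x : Fin n) => if f i = x then (1:ℝ) else 0)ᵀ *ᵥ v))
  rw [hwSw, huu, hww] at hCS
  nlinarith [hCS, mul_pos ha0 ha0, ha0]

lemma mySymmHerm {k : ℕ} {A : Matrix (Fin k) (Fin k) ℝ} (h : A.IsSymm) : A.IsHermitian := by
  ext i j
  rw [conjTranspose_apply, star_trivial]
  exact congrFun (congrFun h i) j

theorem stmt1 {m n : ℕ} (hn : 2 ≤ n)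
    (S : Matrix (Fin m) (Fin m) ℝ) (hsymm : S.IsSymm)
    (ρ : ℝ) (hρ : IsSpectralRadius S ρ)
    (Shat : Matrix (Fin n) (Fin n) ℝ) (hShat : Shat.IsSymm)
    (hQO : IsQuasiOrthogonal Shat) (hsub : IsPrincipalSubmatrix S Shat)
    (ρhat : ℝ) (hρhat : IsSpectralRadius Shat ρhat)
    (hcond : (n : ℝ) - m ≤ ((n : ℝ) - 1) / 2) :
    ρhat = ρ ∧ (n : ℤ) ≥ 2 * m - (eigMult S ρ + eigMult S (-ρ)) := by
  classical
  obtain ⟨f, hfm, hfeq⟩ := hsub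
  have hfinj := hfm.injective
  obtain ⟨q, hq0, hqE⟩ := hQO
  have hShatT : Shatᵀ = Shat := hShat
  have hSq : Shat * Shat = q • 1 := by rwa [hShatT] at hqE
  have hHn : Shat.IsHermitian := mySymmHerm hShat
  have hHm : S.IsHermitian := mySymmHerm hsymm
  set r := Real.sqrt q with hrdef
  have hr0 : 0 < r := Real.sqrt_pos.mpr hq0
  have hr2 : r ^ 2 = q := Real.sq_sqrt hq0.le
  have hSsub : S = Shat.submatrix f f := by ext i j; exact hfeq i j
  have hmn : n + 1 ≤ 2 * m := by
    have h : (n : ℝ) + 1 ≤ 2 * m := by linarith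
    exact_mod_cast h
  have heigShat : ∀ i, |hHn.eigenvalues i| = r := fun i => by
    rw [← Real.sqrt_sq_eq_abs, myEigSq hHn hSq i]
  have hρhat_r : ρhat = r := by
    rcases hρhat.1 with h | h
    · have h0 : 0 ≤ ρhat := le_trans (abs_nonneg ρhat) (hρhat.2 _ h)
      obtain ⟨i, hi⟩ := (myRootIff hHn ρhat).mp h
      have h2 := heigShat i
      rw [hi, abs_of_nonneg h0] at h2
      exact h2
    · have h0 : 0 ≤ ρhat := by
        have h1 := hρhat.2 _ h
        rw [abs_neg] at h1
        exact le_trans (abs_nonneg ρhat) h1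
      obtain ⟨i, hi⟩ := (myRootIff hHn (-ρhat)).mp h
      have h2 := heigShat i
      rw [hi, abs_neg, abs_of_nonneg h0] at h2
      exact h2
  -- Rayleigh bound: all eigenvalues of S are at most r in absolute value
  have hEigS : ∀ j, |hHm.eigenvalues j| ≤ r := by
    intro j
    have hv : S *ᵥ ⇑(hHm.eigenvectorBasis j) = hHm.eigenvalues j • ⇑(hHm.eigenvectorBasis j) :=
      hHm.mulVec_eigenvectorBasis j
    have hvne : ⇑(hHm.eigenvectorBasis j) ≠ (0 : Fin m → ℝ) := fun hz =>
      hHm.eigenvectorBasis.orthonormal.ne_zero j (by ext x; exact congrFun hz x)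
    have he2 : hHm.eigenvalues j ^ 2 ≤ q := myRayleigh S Shat f hfinj hSsub hqE hv hvne
    calc |hHm.eigenvalues j| = Real.sqrt (hHm.eigenvalues j ^ 2) :=
          (Real.sqrt_sq_eq_abs _).symm
      _ ≤ Real.sqrt q := Real.sqrt_le_sqrt he2
  -- rank inequality
  have hz : (Shat - r • 1) * (Shat - (-r) • 1) = 0 := by
    have hrr : r * r = q := by nlinarith
    rw [neg_smul, sub_neg_eq_add, Matrix.sub_mul, Matrix.mul_add, Matrix.mul_add]
    simp only [Matrix.mul_smul, Matrix.smul_mul, smul_smul, mul_one, one_mul]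
    rw [hSq, hrr]
    abel
  have hranks : (Shat - r • 1).rank + (Shat - (-r) • 1).rank ≤ n := by
    have h := rank_add_rank_le_card_of_mul_eq_zero hz
    rwa [Fintype.card_fin] at h
  have hsub_t : ∀ t : ℝ, S - t • 1 = (Shat - t • 1).submatrix f f := by
    intro t
    ext i j
    simp only [Matrix.sub_apply, Matrix.submatrix_apply, Matrix.smul_apply, Matrix.one_apply,
      hfinj.eq_iff, hfeq i j]
  have hle : ∀ t : ℝ, (S - t • 1).rank ≤ (Shat - t • 1).rank := fun t => by
    rw [hsub_t t]; exact myRankSubmatrixLe _ f hfinj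
  have hm_r := myRankAddMult hHm r
  have hm_nr := myRankAddMult hHm (-r)
  have key : 2 * m ≤ n +
      ((Matrix.charpoly S).rootMultiplicity r + (Matrix.charpoly S).rootMultiplicity (-r)) := by
    have h1 := hle r
    have h2 := hle (-r)
    omega
  have hSne : Matrix.charpoly S ≠ 0 := (Matrix.charpoly_monic S).ne_zero
  have hrootS : (Matrix.charpoly S).IsRoot r ∨ (Matrix.charpoly S).IsRoot (-r) := by
    rcases Nat.lt_or_ge 0 ((Matrix.charpoly S).rootMultiplicity r) with h | h
    · exact Or.inl ((Polynomial.rootMultiplicity_pos hSne).mp h)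
    · exact Or.inr ((Polynomial.rootMultiplicity_pos hSne).mp (by omega))
  have hrρ : r ≤ ρ := by
    rcases hrootS with h | h
    · have h1 := hρ.2 r h; rwa [abs_of_pos hr0] at h1
    · have h1 := hρ.2 (-r) h; rwa [abs_neg, abs_of_pos hr0] at h1
  have hρr : ρ ≤ r := by
    rcases hρ.1 with h | h
    · obtain ⟨j, hj⟩ := (myRootIff hHm ρ).mp h
      have h1 := hEigS j
      rw [hj] at h1
      exact le_trans (le_abs_self ρ) h1
    · obtain ⟨j, hj⟩ := (myRootIff hHm (-ρ)).mp h
      have h1 := hEigS j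
      rw [hj, abs_neg] at h1
      exact le_trans (le_abs_self ρ) h1
  have hρ_r : ρ = r := le_antisymm hρr hrρ
  refine ⟨by rw [hρhat_r, hρ_r], ?_⟩
  unfold eigMult
  rw [hρ_r]
  omega
end

section
/- Let S be an n×n nonzero real symmetric matrix with spectral radius ρ. The least integer d such that S admits a symmetric quasi-orthogonal extension of order n + d equals n - μ_ρ(S) - μ_{-ρ}(S). -/
open Matrix Polynomial

section AuxQO

lemma charpoly_conj' {m : Type*} [Fintype m] [DecidableEq m]
    (U M : Matrix m m ℝ) (h1 : U * Uᵀ = 1) :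
    (U * M * Uᵀ).charpoly = M.charpoly := by
  have hone : U.map (C : ℝ →+* ℝ[X]) * Uᵀ.map C = 1 := by
    rw [← Matrix.map_mul, h1, Matrix.map_one C C.map_zero C.map_one]
  have key : charmatrix (U * M * Uᵀ) = U.map C * charmatrix M * Uᵀ.map C := by
    unfold charmatrix
    rw [RingHom.mapMatrix_apply, RingHom.mapMatrix_apply]
    rw [mul_sub, sub_mul]
    congr 1
    · rw [← (Matrix.scalar_commute (X : ℝ[X]) (Commute.all X) (U.map C)).eq, mul_assoc, hone,
        Matrix.mul_one]
    · rw [← Matrix.map_mul, ← Matrix.map_mul]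
  rw [Matrix.charpoly, Matrix.charpoly, key, det_mul, det_mul, mul_comm (det (U.map C)),
    mul_assoc, ← det_mul, hone, det_one, mul_one]

lemma charpoly_diag' {m : Type*} [Fintype m] [DecidableEq m] (μ : m → ℝ) :
    (Matrix.diagonal μ).charpoly = ∏ i, (X - C (μ i)) := by
  rw [Matrix.charpoly]
  have : charmatrix (Matrix.diagonal μ) = Matrix.diagonal (fun i => X - C (μ i)) := by
    ext i j
    by_cases h : i = j
    · subst h; simp [charmatrix_apply_eq]
    · simp [charmatrix_apply_ne _ _ _ h, Matrix.diagonal_apply_ne _ h]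
  rw [this, det_diagonal]

lemma roots_prodXsubC {m : Type*} [Fintype m] (μ : m → ℝ) :
    (∏ i, (X - C (μ i))).roots = Finset.univ.val.map μ := by
  have := Polynomial.roots_multiset_prod_X_sub_C (Finset.univ.val.map μ)
  rw [← this]
  congr 1
  rw [Finset.prod_eq_multiset_prod]
  simp [Multiset.map_map]

lemma eigmult_eq {m : Type*} [Fintype m] (μ : m → ℝ) (lam : ℝ) :
    (∏ i, (X - C (μ i))).rootMultiplicity lam
      = (Finset.univ.filter (fun i => μ i = lam)).card := by
  have hne : (∏ i, (X - C (μ i))) ≠ 0 := by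
    apply (monic_prod_of_monic _ _ (fun i _ => monic_X_sub_C (μ i))).ne_zero
  rw [← Polynomial.count_roots, roots_prodXsubC]
  rw [Multiset.count_map]
  simp [Finset.card, Finset.filter, eq_comm]

lemma real_spectral {m : Type*} [Fintype m] [DecidableEq m] (S : Matrix m m ℝ)
    (hsymm : S.IsSymm) :
    ∃ (U : Matrix m m ℝ) (μ : m → ℝ), U * Uᵀ = 1 ∧ Uᵀ * U = 1 ∧
      S = U * Matrix.diagonal μ * Uᵀ := by
  have hA : S.IsHermitian := by
    rw [Matrix.IsHermitian, Matrix.conjTranspose]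
    simpa [(show (⇑(starRingEnd ℝ) : ℝ → ℝ) = id from funext fun x => conj_trivial x), Matrix.map_id] using hsymm.eq
  refine ⟨(hA.eigenvectorUnitary : Matrix m m ℝ), hA.eigenvalues, ?_, ?_, ?_⟩
  · have := (Matrix.mem_unitaryGroup_iff).mp hA.eigenvectorUnitary.2
    simpa [Matrix.star_eq_conjTranspose, Matrix.conjTranspose, (show (⇑(starRingEnd ℝ) : ℝ → ℝ) = id from funext fun x => conj_trivial x), Matrix.map_id] using this
  · have := (Matrix.mem_unitaryGroup_iff').mp hA.eigenvectorUnitary.2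
    simpa [Matrix.star_eq_conjTranspose, Matrix.conjTranspose, (show (⇑(starRingEnd ℝ) : ℝ → ℝ) = id from funext fun x => conj_trivial x), Matrix.map_id] using this
  · have := hA.spectral_theorem
    simpa [Matrix.star_eq_conjTranspose, Matrix.conjTranspose, (show (⇑(starRingEnd ℝ) : ℝ → ℝ) = id from funext fun x => conj_trivial x), Matrix.map_id] using this

section Lower
variable {n d : ℕ}

lemma lower_core (S : Matrix (Fin n) (Fin n) ℝ) (hsymm : S.IsSymm)
    (Q : Matrix (Fin (n+d)) (Fin (n+d)) ℝ) (hQs : Q.IsSymm) (q : ℝ)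
    (hQ : Qᵀ * Q = q • 1) (f : Fin n → Fin (n+d)) (hfinj : Function.Injective f)
    (hfS : ∀ i j, S i j = Q (f i) (f j)) :
    (q • 1 - S * S).PosSemidef ∧ (q • (1 : Matrix (Fin n) (Fin n) ℝ) - S * S).rank ≤ d := by
  classical
  set P : Matrix (Fin (n+d)) (Fin n) ℝ := Matrix.of (fun a i => if a = f i then 1 else 0) with hP
  have hMP : ∀ {α : Type} [Fintype α] (M : Matrix α (Fin (n+d)) ℝ),
      M * P = M.submatrix id f := by
    intro α _ M
    ext a i
    simp [hP, Matrix.mul_apply, mul_ite, mul_one, mul_zero]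
  have hPM : ∀ {α : Type} [Fintype α] (M : Matrix (Fin (n+d)) α ℝ),
      Pᵀ * M = M.submatrix f id := by
    intro α _ M
    ext i b
    simp [hP, Matrix.mul_apply, ite_mul, one_mul, zero_mul]
  have hPtP : Pᵀ * P = 1 := by
    rw [hMP]
    ext i j
    by_cases h : i = j
    · subst h; simp [hP]
    · simp only [hP, Matrix.submatrix_apply, Matrix.transpose_apply, Matrix.of_apply, id,
        Matrix.one_apply_ne h, ite_eq_right_iff]
      intro hc; exact absurd (hfinj hc.symm) h
  have hQQ : Q * Q = q • 1 := by rw [← hQ]; congr 1; exact hQs.eq.symm ▸ rfl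
  have hSQ : Pᵀ * Q * P = S := by
    rw [Matrix.mul_assoc, hMP, hPM]
    ext i j
    simp [hfS i j]
  -- A := Q*P - P*S
  set A : Matrix (Fin (n+d)) (Fin n) ℝ := Q * P - P * S with hA
  have hAtA : Aᵀ * A = q • 1 - S * S := by
    have hQP_P : Pᵀ * (Q * P) = S := by rw [← Matrix.mul_assoc]; exact hSQ
    have hPQt : (Q * P)ᵀ = Pᵀ * Q := by rw [Matrix.transpose_mul, hQs.eq]
    rw [hA, Matrix.transpose_sub, Matrix.sub_mul, Matrix.mul_sub, Matrix.mul_sub, hPQt,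
      Matrix.transpose_mul, hsymm.eq]
    have e1 : Pᵀ * Q * (Q * P) = q • 1 := by
      rw [Matrix.mul_assoc, ← Matrix.mul_assoc Q Q P, hQQ, Matrix.smul_mul, Matrix.one_mul,
        Matrix.mul_smul, hPtP]
    have e2 : Pᵀ * Q * (P * S) = S * S := by
      rw [← Matrix.mul_assoc, hSQ]
    have e3 : S * Pᵀ * (Q * P) = S * S := by
      rw [Matrix.mul_assoc, hQP_P]
    have e4 : S * Pᵀ * (P * S) = S * S := by
      rw [Matrix.mul_assoc, ← Matrix.mul_assoc Pᵀ P S, hPtP, Matrix.one_mul]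
    rw [e1, e2, e3, e4]
    abel
  have hpsd : (q • 1 - S * S).PosSemidef := by
    rw [← hAtA]
    have := Matrix.posSemidef_conjTranspose_mul_self A
    rwa [Matrix.conjTranspose_eq_transpose_of_trivial] at this
  refine ⟨hpsd, ?_⟩
  rw [← hAtA, Matrix.rank_transpose_mul_self]
  -- A = (1 - P*Pᵀ) * (Q*P)
  have hfact : A = (1 - P * Pᵀ) * (Q * P) := by
    rw [Matrix.sub_mul, Matrix.one_mul, hA, Matrix.mul_assoc, ← Matrix.mul_assoc Pᵀ Q P, hSQ]
  set g : Fin (n+d) → ℝ := fun a => if ∃ i, f i = a then 0 else 1 with hg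
  have hdiag : 1 - P * Pᵀ = Matrix.diagonal g := by
    ext a b
    by_cases h : a = b
    · subst h
      by_cases hr : ∃ i, f i = a
      · obtain ⟨i0, hi0⟩ := hr
        have : (P * Pᵀ) a a = 1 := by
          rw [Matrix.mul_apply]
          rw [Finset.sum_eq_single i0]
          · simp [hP, hi0.symm]
          · intro j _ hj
            simp only [hP, Matrix.of_apply, Matrix.transpose_apply]
            rw [if_neg, zero_mul]
            intro hc; exact hj (hfinj (by rw [← hc, hi0]))
          · simp
        have hga : g a = 0 := by
          rw [hg]; exact if_pos ⟨i0, hi0⟩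
        simp [Matrix.sub_apply, this, hga]
      · have : (P * Pᵀ) a a = 0 := by
          rw [Matrix.mul_apply]
          apply Finset.sum_eq_zero
          intro j _
          simp only [hP, Matrix.of_apply, Matrix.transpose_apply]
          rw [if_neg, zero_mul]
          intro hc; exact hr ⟨j, hc.symm⟩
        have hga : g a = 1 := by rw [hg]; exact if_neg hr
        simp [Matrix.sub_apply, this, hga]
    · have : (P * Pᵀ) a b = 0 := by
        rw [Matrix.mul_apply]
        apply Finset.sum_eq_zero
        intro j _
        simp only [hP, Matrix.of_apply, Matrix.transpose_apply]
        by_cases hc : a = f j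
        · rw [if_neg (show ¬ b = f j from fun hc2 => h (hc.trans hc2.symm)), mul_zero]
        · rw [if_neg hc, zero_mul]
      simp [this, Matrix.diagonal_apply_ne _ h, Matrix.one_apply_ne h]
  have hrank1 : A.rank ≤ (Matrix.diagonal g).rank := by
    rw [hfact, hdiag]
    exact Matrix.rank_mul_le_left _ _
  refine hrank1.trans ?_
  rw [Matrix.rank_diagonal]
  -- card {a // g a ≠ 0} = d
  have : Fintype.card {a // g a ≠ 0} = d := by
    have h1 : Fintype.card {a // g a ≠ 0} = Finset.card (Finset.univ.filter (fun a => ¬∃ i, f i = a)) := by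
      rw [Fintype.card_subtype]
      congr 1
      apply Finset.filter_congr
      intro a _
      simp [hg]
    rw [h1]
    have h2 : (Finset.univ.filter (fun a => ∃ i, f i = a)) = Finset.univ.image f := by
      ext a; simp [eq_comm]
    have h3 := Finset.card_filter_add_card_filter_not
      (s := (Finset.univ : Finset (Fin (n+d)))) (p := fun a => ∃ i, f i = a)
    rw [h2] at h3
    rw [Finset.card_image_of_injective _ hfinj] at h3
    simp only [Finset.card_univ, Fintype.card_fin] at h3
    omega
  omega

end Lower
lemma upper_core {n r : ℕ} (S : Matrix (Fin n) (Fin n) ℝ) (ρ : ℝ) (hρpos : 0 < ρ)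
    (U : Matrix (Fin n) (Fin n) ℝ) (μ : Fin n → ℝ)
    (hU1 : U * Uᵀ = 1) (hU2 : Uᵀ * U = 1) (hS : S = U * Matrix.diagonal μ * Uᵀ)
    (hbound : ∀ i, μ i ^ 2 ≤ ρ ^ 2)
    (e : {i : Fin n // μ i ≠ ρ ∧ μ i ≠ -ρ} ≃ Fin r) :
    ∃ Q : Matrix (Fin (n + r)) (Fin (n + r)) ℝ,
      Q.IsSymm ∧ IsQuasiOrthogonal Q ∧ IsPrincipalSubmatrix S Q := by
  classical
  set ι := {i : Fin n // μ i ≠ ρ ∧ μ i ≠ -ρ} with hι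
  have hsq : ∀ i : Fin n, ¬(μ i ≠ ρ ∧ μ i ≠ -ρ) → μ i ^ 2 = ρ ^ 2 := by
    intro i hi
    rcases not_and_or.mp hi with h | h <;> rw [not_not.mp h] <;> ring
  have hnn : ∀ i : Fin n, 0 ≤ ρ ^ 2 - μ i ^ 2 := fun i => sub_nonneg.mpr (hbound i)
  set J : Matrix (Fin n) ι ℝ :=
    Matrix.of (fun i j => if i = j.1 then Real.sqrt (ρ ^ 2 - μ i ^ 2) else 0) with hJ
  set B : Matrix (Fin n) ι ℝ := U * J with hB
  set Cm : Matrix ι ι ℝ := Matrix.diagonal (fun j : ι => -μ j.1) with hCm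
  have hsymmS : Sᵀ = S := by
    rw [hS]; simp [Matrix.transpose_mul, Matrix.diagonal_transpose, Matrix.mul_assoc]
  -- key diagonal identities
  have hJJt : J * Jᵀ = Matrix.diagonal (fun i => ρ ^ 2 - μ i ^ 2) := by
    ext i i'
    by_cases h : i = i'
    · subst h
      rw [Matrix.diagonal_apply_eq, Matrix.mul_apply]
      by_cases hT : μ i ≠ ρ ∧ μ i ≠ -ρ
      · rw [Finset.sum_eq_single (⟨i, hT⟩ : ι)]
        · simp [hJ, Real.mul_self_sqrt (hnn i)]
        · intro j _ hj
          have : ¬ i = j.1 := by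
            intro hc; exact hj (Subtype.ext hc.symm)
          simp [hJ, this]
        · simp
      · rw [Finset.sum_eq_zero, hsq i hT, sub_self]
        intro j _
        have : ¬ i = j.1 := by
          intro hc; rw [hc] at hT; exact hT j.2
        simp [hJ, this]
    · rw [Matrix.diagonal_apply_ne _ h, Matrix.mul_apply]
      apply Finset.sum_eq_zero
      intro j _
      by_cases hc : i = j.1
      · have : ¬ i' = j.1 := fun hc2 => h (hc.trans hc2.symm)
        simp [hJ, this]
      · simp [hJ, hc]
  have hJtJ : Jᵀ * J = Matrix.diagonal (fun j : ι => ρ ^ 2 - μ j.1 ^ 2) := by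
    ext j j'
    rw [Matrix.mul_apply]
    by_cases h : j = j'
    · subst h
      rw [Matrix.diagonal_apply_eq]
      rw [Finset.sum_eq_single j.1]
      · simp [hJ, Real.mul_self_sqrt (hnn j.1)]
      · intro i _ hi
        simp [hJ, fun hc : i = j.1 => hi hc]
      · simp
    · rw [Matrix.diagonal_apply_ne _ h]
      apply Finset.sum_eq_zero
      intro i _
      by_cases hc : i = j.1
      · have : ¬ i = j'.1 := by
          intro hc2; exact h (Subtype.ext (hc.symm.trans hc2))
        simp [hJ, this]
      · simp [hJ, hc]
  have hDJ : Matrix.diagonal μ * J + J * Cm = 0 := by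
    ext i j
    rw [Matrix.add_apply, Matrix.diagonal_mul, Matrix.mul_diagonal, Matrix.zero_apply]
    by_cases hc : i = j.1
    · subst hc
      simp [hJ]; ring
    · simp [hJ, hc]
  -- the four blocks
  have ha : S * S + B * Bᵀ = (ρ ^ 2) • (1 : Matrix (Fin n) (Fin n) ℝ) := by
    have h1 : S * S = U * (Matrix.diagonal μ * Matrix.diagonal μ) * Uᵀ := by
      rw [hS]
      calc U * Matrix.diagonal μ * Uᵀ * (U * Matrix.diagonal μ * Uᵀ)
          = U * Matrix.diagonal μ * (Uᵀ * U) * Matrix.diagonal μ * Uᵀ := by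
            simp only [Matrix.mul_assoc]
        _ = U * (Matrix.diagonal μ * Matrix.diagonal μ) * Uᵀ := by
            rw [hU2]; simp only [Matrix.mul_assoc, Matrix.one_mul]
    have h2 : B * Bᵀ = U * (J * Jᵀ) * Uᵀ := by
      rw [hB, Matrix.transpose_mul]
      simp only [Matrix.mul_assoc]
    rw [h1, h2, ← Matrix.add_mul, ← Matrix.mul_add, hJJt, Matrix.diagonal_mul_diagonal,
      Matrix.diagonal_add]
    have : (fun i => μ i * μ i + (ρ ^ 2 - μ i ^ 2)) = fun _ => ρ ^ 2 := by
      funext i; ring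
    rw [this, ← Matrix.smul_one_eq_diagonal, Matrix.mul_smul, Matrix.smul_mul, Matrix.mul_one, hU1]
  have hb : S * B + B * Cm = 0 := by
    have h1 : S * B = U * (Matrix.diagonal μ * J) := by
      rw [hS, hB]
      calc U * Matrix.diagonal μ * Uᵀ * (U * J)
          = U * Matrix.diagonal μ * (Uᵀ * U) * J := by simp only [Matrix.mul_assoc]
        _ = U * (Matrix.diagonal μ * J) := by rw [hU2]; simp only [Matrix.mul_assoc, Matrix.one_mul, Matrix.mul_one]
    have h2 : B * Cm = U * (J * Cm) := by rw [hB, Matrix.mul_assoc]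
    rw [h1, h2, ← Matrix.mul_add, hDJ, Matrix.mul_zero]
  have hCms : Cmᵀ = Cm := by rw [hCm, Matrix.diagonal_transpose]
  have hc : Bᵀ * S + Cm * Bᵀ = 0 := by
    have h := congrArg Matrix.transpose hb
    rwa [Matrix.transpose_add, Matrix.transpose_mul S B, Matrix.transpose_mul B Cm, hsymmS, hCms,
      Matrix.transpose_zero] at h
  have hd : Bᵀ * B + Cm * Cm = (ρ ^ 2) • (1 : Matrix ι ι ℝ) := by
    have h1 : Bᵀ * B = Jᵀ * J := by
      rw [hB, Matrix.transpose_mul]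
      calc Jᵀ * Uᵀ * (U * J) = Jᵀ * (Uᵀ * U) * J := by simp only [Matrix.mul_assoc]
        _ = Jᵀ * J := by rw [hU2]; simp only [Matrix.mul_one, Matrix.mul_assoc, Matrix.one_mul]
    rw [h1, hJtJ, hCm, Matrix.diagonal_mul_diagonal, Matrix.diagonal_add]
    have : (fun j : ι => ρ ^ 2 - μ j.1 ^ 2 + -μ j.1 * -μ j.1) = fun _ => ρ ^ 2 := by
      funext j; ring
    rw [this, ← Matrix.smul_one_eq_diagonal]
  -- assemble
  set Q' : Matrix (Fin n ⊕ ι) (Fin n ⊕ ι) ℝ := Matrix.fromBlocks S B Bᵀ Cm with hQ'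
  have hQ's : Q'ᵀ = Q' := by
    rw [hQ', Matrix.fromBlocks_transpose, hsymmS, Matrix.transpose_transpose, hCm,
      Matrix.diagonal_transpose]
  have hQ'2 : Q' * Q' = (ρ ^ 2) • 1 := by
    rw [hQ', Matrix.fromBlocks_multiply, ha, hb, hc, hd]
    have h9 : (ρ ^ 2 : ℝ) • (1 : Matrix (Fin n ⊕ ι) (Fin n ⊕ ι) ℝ)
        = Matrix.fromBlocks ((ρ^2 : ℝ) • 1) ((ρ^2 : ℝ) • (0 : Matrix (Fin n) ι ℝ))
          ((ρ^2 : ℝ) • (0 : Matrix ι (Fin n) ℝ)) ((ρ^2 : ℝ) • 1) := by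
      rw [← Matrix.fromBlocks_smul, Matrix.fromBlocks_one]
    rw [h9, smul_zero, smul_zero]
  set E : (Fin n ⊕ ι) ≃ Fin (n + r) := (Equiv.sumCongr (Equiv.refl (Fin n)) e).trans finSumFinEquiv
    with hE
  refine ⟨Q'.submatrix E.symm E.symm, ?_, ⟨ρ ^ 2, by positivity, ?_⟩, ?_⟩
  · rw [Matrix.IsSymm, Matrix.transpose_submatrix, hQ's]
  · rw [Matrix.transpose_submatrix, hQ's, Matrix.submatrix_mul_equiv, hQ'2]
    ext a b
    rw [Matrix.submatrix_apply]
    by_cases hab : a = b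
    · subst hab
      simp [Matrix.smul_apply, Matrix.one_apply_eq]
    · have hne : E.symm a ≠ E.symm b := fun hc => hab (E.symm.injective hc)
      simp [Matrix.smul_apply, Matrix.one_apply_ne hne, Matrix.one_apply_ne hab]
  · refine ⟨fun i => E (Sum.inl i), ?_, ?_⟩
    · intro a b hab
      show E (Sum.inl a) < E (Sum.inl b)
      have h1 : ∀ i : Fin n, E (Sum.inl i) = Fin.castAdd r i := by
        intro i
        rw [hE]
        simp only [Equiv.trans_apply, Equiv.sumCongr_apply, Sum.map_inl, Equiv.refl_apply,
          finSumFinEquiv_apply_left]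
      rw [h1, h1, Fin.lt_def, Fin.coe_castAdd, Fin.coe_castAdd]
      exact hab
    · intro i j
      show S i j = Q'.submatrix E.symm E.symm (E (Sum.inl i)) (E (Sum.inl j))
      rw [Matrix.submatrix_apply, Equiv.symm_apply_apply, Equiv.symm_apply_apply, hQ',
        Matrix.fromBlocks_apply₁₁]

end AuxQO

theorem stmt2 {n : ℕ} (S : Matrix (Fin n) (Fin n) ℝ) (hsymm : S.IsSymm) (hS0 : S ≠ 0)
    (ρ : ℝ) (hρ : IsSpectralRadius S ρ) :
    qIndex S = n - (eigMult S ρ + eigMult S (-ρ)) := by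
  classical
  obtain ⟨U, μ, hU1, hU2, hSdec⟩ := real_spectral S hsymm
  have hchar : S.charpoly = ∏ i, (X - C (μ i)) := by
    rw [hSdec, charpoly_conj' U _ hU1, charpoly_diag']
  have hroot : ∀ lam, S.charpoly.IsRoot lam ↔ ∃ i, μ i = lam := by
    intro lam
    rw [hchar, IsRoot.def, eval_prod, Finset.prod_eq_zero_iff]
    constructor
    · rintro ⟨i, -, h⟩
      simp only [eval_sub, eval_X, eval_C, sub_eq_zero] at h
      exact ⟨i, h.symm⟩
    · rintro ⟨i, h⟩
      exact ⟨i, Finset.mem_univ i, by simp [h]⟩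
  have hbound : ∀ i, |μ i| ≤ ρ := fun i => hρ.2 (μ i) ((hroot _).mpr ⟨i, rfl⟩)
  have hex : ∃ i, μ i = ρ ∨ μ i = -ρ := by
    rcases hρ.1 with h | h
    · obtain ⟨i, hi⟩ := (hroot ρ).mp h; exact ⟨i, Or.inl hi⟩
    · obtain ⟨i, hi⟩ := (hroot (-ρ)).mp h; exact ⟨i, Or.inr hi⟩
  have hρ0 : 0 ≤ ρ := by
    obtain ⟨i, hi⟩ := hex
    have := hbound i
    rcases hi with h | h <;> rw [h] at this
    · exact (abs_nonneg ρ).trans this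
    · rw [abs_neg] at this; exact (abs_nonneg ρ).trans this
  have hρpos : 0 < ρ := by
    rcases lt_or_eq_of_le hρ0 with h | h
    · exact h
    · exfalso
      apply hS0
      have hall : ∀ i, μ i = 0 := by
        intro i
        have := hbound i
        rw [← h] at this
        exact abs_eq_zero.mp (le_antisymm this (abs_nonneg _))
      have hz : Matrix.diagonal μ = 0 := by
        rw [show μ = fun _ => (0:ℝ) from funext hall, Matrix.diagonal_zero]
      rw [hSdec, hz, Matrix.mul_zero, Matrix.zero_mul]
  have hsqb : ∀ i, μ i ^ 2 ≤ ρ ^ 2 := by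
    intro i
    calc μ i ^ 2 = |μ i| ^ 2 := (sq_abs _).symm
      _ ≤ ρ ^ 2 := pow_le_pow_left₀ (abs_nonneg _) (hbound i) 2
  -- counting
  set K : ℕ := (Finset.univ.filter (fun i => μ i = ρ ∨ μ i = -ρ)).card with hKdef
  have hdisj : Disjoint (Finset.univ.filter (fun i => μ i = ρ))
      (Finset.univ.filter (fun i => μ i = -ρ)) := by
    rw [Finset.disjoint_left]
    intro i hi1 hi2
    rw [Finset.mem_filter] at hi1 hi2
    have : ρ = -ρ := hi1.2 ▸ hi2.2
    linarith
  have hmultsum : eigMult S ρ + eigMult S (-ρ) = K := by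
    have h1 : eigMult S ρ = (Finset.univ.filter (fun i => μ i = ρ)).card := by
      rw [eigMult, hchar, eigmult_eq]
    have h2 : eigMult S (-ρ) = (Finset.univ.filter (fun i => μ i = -ρ)).card := by
      rw [eigMult, hchar, eigmult_eq]
    rw [h1, h2, hKdef, Finset.filter_or, Finset.card_union_of_disjoint hdisj]
  have hKn : K ≤ n := by
    rw [hKdef]
    calc (Finset.univ.filter (fun i => μ i = ρ ∨ μ i = -ρ)).card
        ≤ Finset.univ.card := Finset.card_filter_le _ _
      _ = n := by simp
  set r : ℕ := Fintype.card {i : Fin n // μ i ≠ ρ ∧ μ i ≠ -ρ} with hrdef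
  have hpartK := Finset.card_filter_add_card_filter_not
    (s := (Finset.univ : Finset (Fin n))) (p := fun i => μ i = ρ ∨ μ i = -ρ)
  have hfilteq : (Finset.univ.filter (fun i => ¬(μ i = ρ ∨ μ i = -ρ)))
      = (Finset.univ.filter (fun i => μ i ≠ ρ ∧ μ i ≠ -ρ)) := by
    apply Finset.filter_congr
    intro i _
    simp [not_or]
  have hrK : r = n - K := by
    rw [hrdef, Fintype.card_subtype, ← hfilteq]
    rw [hfilteq] at hpartK
    simp only [Finset.card_univ, Fintype.card_fin] at hpartK
    rw [hfilteq]
    omega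
  -- upper bound
  obtain ⟨Q, hQs, hQqo, hQps⟩ := upper_core S ρ hρpos U μ hU1 hU2 hSdec hsqb
    (Fintype.equivFin {i : Fin n // μ i ≠ ρ ∧ μ i ≠ -ρ})
  have hmem : (n - K) ∈ {d : ℕ | ∃ Q : Matrix (Fin (n + d)) (Fin (n + d)) ℝ,
      Q.IsSymm ∧ IsQuasiOrthogonal Q ∧ IsPrincipalSubmatrix S Q} := by
    rw [← hrK]
    exact ⟨Q, hQs, hQqo, hQps⟩
  -- lower bound
  have hlow : ∀ d ∈ {d : ℕ | ∃ Q : Matrix (Fin (n + d)) (Fin (n + d)) ℝ,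
      Q.IsSymm ∧ IsQuasiOrthogonal Q ∧ IsPrincipalSubmatrix S Q}, n - K ≤ d := by
    rintro d ⟨Q', hQ's, ⟨q, hq, hQ'o⟩, ⟨f, hfmono, hfS⟩⟩
    obtain ⟨hpsd, hrank⟩ := lower_core S hsymm Q' hQ's q hQ'o f hfmono.injective hfS
    set g : Fin n → ℝ := fun i => q - μ i * μ i with hgdef
    have hSS : S * S = U * (Matrix.diagonal μ * Matrix.diagonal μ) * Uᵀ := by
      rw [hSdec]
      calc U * Matrix.diagonal μ * Uᵀ * (U * Matrix.diagonal μ * Uᵀ)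
          = U * Matrix.diagonal μ * (Uᵀ * U) * Matrix.diagonal μ * Uᵀ := by
            simp only [Matrix.mul_assoc]
        _ = U * (Matrix.diagonal μ * Matrix.diagonal μ) * Uᵀ := by
            rw [hU2]; simp only [Matrix.mul_assoc, Matrix.one_mul]
    have hNdec : q • (1 : Matrix (Fin n) (Fin n) ℝ) - S * S
        = U * Matrix.diagonal g * Uᵀ := by
      have h1 : q • (1 : Matrix (Fin n) (Fin n) ℝ) = U * (q • 1) * Uᵀ := by
        rw [Matrix.mul_smul, Matrix.smul_mul, Matrix.mul_one, hU1]
      rw [h1, hSS, ← Matrix.sub_mul, ← Matrix.mul_sub, Matrix.diagonal_mul_diagonal,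
        Matrix.smul_one_eq_diagonal, Matrix.diagonal_sub]
    have hDgU : Matrix.diagonal g = Uᵀ * (q • (1 : Matrix (Fin n) (Fin n) ℝ) - S * S) * U := by
      rw [hNdec]
      symm
      calc Uᵀ * (U * Matrix.diagonal g * Uᵀ) * U
          = (Uᵀ * U) * (Matrix.diagonal g * (Uᵀ * U)) := by simp only [Matrix.mul_assoc]
        _ = Matrix.diagonal g := by rw [hU2, Matrix.one_mul, Matrix.mul_one]
    have hgnn : ∀ i, 0 ≤ g i := by
      have hpsd2 : (Matrix.diagonal g).PosSemidef := by
        rw [hDgU]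
        have := hpsd.conjTranspose_mul_mul_same U
        rwa [Matrix.conjTranspose_eq_transpose_of_trivial] at this
      exact Matrix.posSemidef_diagonal_iff.mp hpsd2
    have hqρ : ρ ^ 2 ≤ q := by
      obtain ⟨i0, hi0⟩ := hex
      have h2 : 0 ≤ q - μ i0 * μ i0 := hgnn i0
      rcases hi0 with h | h <;> nlinarith
    have hsub : Finset.univ.filter (fun i => g i = 0)
        ⊆ Finset.univ.filter (fun i => μ i = ρ ∨ μ i = -ρ) := by
      intro i hi
      rw [Finset.mem_filter] at hi ⊢
      refine ⟨Finset.mem_univ i, ?_⟩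
      have h1 : q - μ i * μ i = 0 := hi.2
      have h2 : (μ i - ρ) * (μ i + ρ) = 0 := by nlinarith [hsqb i]
      rcases mul_eq_zero.mp h2 with h | h
      · exact Or.inl (sub_eq_zero.mp h)
      · exact Or.inr (eq_neg_of_add_eq_zero_left h)
    have hcard_le : (Finset.univ.filter (fun i => g i = 0)).card ≤ K :=
      Finset.card_le_card hsub
    have hr1 : (Matrix.diagonal g).rank ≤ (q • (1 : Matrix (Fin n) (Fin n) ℝ) - S * S).rank := by
      rw [hDgU]
      exact le_trans (Matrix.rank_mul_le_left _ _) (Matrix.rank_mul_le_right _ _)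
    have hr2 : (Matrix.diagonal g).rank
        = (Finset.univ.filter (fun i => ¬ g i = 0)).card := by
      rw [Matrix.rank_diagonal, Fintype.card_subtype]
    have hpart := Finset.card_filter_add_card_filter_not
      (s := (Finset.univ : Finset (Fin n))) (p := fun i => g i = 0)
    simp only [Finset.card_univ, Fintype.card_fin] at hpart
    omega
  -- conclude
  rw [hmultsum, qIndex]
  exact le_antisymm (Nat.sInf_le hmem) (le_csInf ⟨n - K, hmem⟩ hlow)
end

section
/- Let P(x) = (x-a₁)^{α₁}⋯(x-a_r)^{α_r} be a polynomial with integer coefficients, where a₁, …, a_r are distinct real numbers and α₁ ≥ α₂ ≥ ⋯ ≥ α_r. If α₁ = α₂ = ⋯ = α_k > α_{k+1}, then (x-a₁)(x-a₂)⋯(x-a_k) has integer coefficients. -/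
open Matrix Polynomial

section AuxStmt7
open Polynomial

noncomputable def gcdChain {F : Type*} [Field F] [DecidableEq F] (p : F[X]) : ℕ → F[X]
  | 0 => p
  | t+1 => EuclideanDomain.gcd (gcdChain p t) (derivative (gcdChain p t))

lemma gcdChain_map {F K : Type*} [Field F] [DecidableEq F] [Field K] [DecidableEq K]
    (f : F →+* K) (p : F[X]) (t : ℕ) :
    (gcdChain p t).map f = gcdChain (p.map f) t := by
  induction t with
  | zero => rfl
  | succ t ih =>
    simp only [gcdChain, ← Polynomial.gcd_map, ← derivative_map, ih]

lemma gcdChain_dvd {F : Type*} [Field F] [DecidableEq F] (p : F[X]) (t : ℕ) :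
    gcdChain p t ∣ p := by
  induction t with
  | zero => exact dvd_rfl
  | succ t ih => exact dvd_trans (EuclideanDomain.gcd_dvd_left _ _) ih

lemma gcdChain_ne_zero {F : Type*} [Field F] [DecidableEq F] {p : F[X]} (hp : p ≠ 0) (t : ℕ) :
    gcdChain p t ≠ 0 := by
  induction t with
  | zero => exact hp
  | succ t ih =>
    simp only [gcdChain, Ne, EuclideanDomain.gcd_eq_zero_iff, not_and]
    intro h; exact absurd h ih

lemma rmStep {F : Type*} [Field F] [CharZero F] [DecidableEq F] {p : F[X]} (hp : p ≠ 0) (x : F) :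
    (EuclideanDomain.gcd p (derivative p)).rootMultiplicity x = p.rootMultiplicity x - 1 := by
  by_cases hd : derivative p = 0
  · have h0 : p.natDegree = 0 := natDegree_eq_zero_of_derivative_eq_zero hd
    obtain ⟨c, rfl⟩ := Polynomial.natDegree_eq_zero.mp h0
    rw [hd, EuclideanDomain.gcd_zero_right]
    simp [rootMultiplicity_C]
  · have hg0 : EuclideanDomain.gcd p (derivative p) ≠ 0 := by
      simp only [Ne, EuclideanDomain.gcd_eq_zero_iff, not_and]
      intro h; exact absurd h hp
    by_cases hx : p.IsRoot x
    · have hdm : (derivative p).rootMultiplicity x = p.rootMultiplicity x - 1 :=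
        derivative_rootMultiplicity_of_root hx
      apply le_antisymm
      · rw [← hdm]
        exact (le_rootMultiplicity_iff hd).mpr
          (dvd_trans (pow_rootMultiplicity_dvd _ x) (EuclideanDomain.gcd_dvd_right _ _))
      · rw [le_rootMultiplicity_iff hg0]
        refine EuclideanDomain.dvd_gcd ?_ ?_
        · exact dvd_trans (pow_dvd_pow _ (Nat.sub_le _ _)) (pow_rootMultiplicity_dvd p x)
        · exact hdm ▸ pow_rootMultiplicity_dvd (derivative p) x
    · have h2 : ¬ (EuclideanDomain.gcd p (derivative p)).IsRoot x := fun h =>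
        hx (isRoot_gcd_iff_isRoot_left_right.mp h).1
      rw [rootMultiplicity_eq_zero h2, rootMultiplicity_eq_zero hx]

lemma rmChain {F : Type*} [Field F] [CharZero F] [DecidableEq F] {p : F[X]} (hp : p ≠ 0)
    (x : F) (t : ℕ) :
    (gcdChain p t).rootMultiplicity x = p.rootMultiplicity x - t := by
  induction t with
  | zero => simp [gcdChain]
  | succ t ih =>
    have := rmStep (gcdChain_ne_zero hp t) x
    simp only [gcdChain] at this ⊢
    rw [this, ih]; omega

end AuxStmt7

theorem stmt7 {r k : ℕ} (hr : 0 < r) (hk1 : 1 ≤ k) (hkr : k < r)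
    (a : Fin r → ℝ) (ha : Function.Injective a) (α : Fin r → ℕ)
    (hanti : Antitone α)
    (P : Polynomial ℝ) (hP : P = ∏ i, (X - C (a i)) ^ (α i))
    (hint : ∀ i, ∃ z : ℤ, P.coeff i = (z : ℝ))
    (heq : ∀ i : Fin r, i.1 < k → α i = α ⟨0, hr⟩)
    (hgt : ∀ i : Fin r, k ≤ i.1 → α i < α ⟨0, hr⟩) :
    ∀ i, ∃ z : ℤ,
      (∏ j ∈ Finset.univ.filter (fun j : Fin r => j.1 < k), (X - C (a j))).coeff i = (z : ℝ) := by
  intro i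
  set m := α ⟨0, hr⟩ with hm
  have hm1 : 1 ≤ m := lt_of_le_of_lt (Nat.zero_le _) (hgt ⟨k, hkr⟩ le_rfl)
  set d := m - 1 with hdd
  have hPm : P.Monic := by
    rw [hP]; exact monic_prod_of_monic _ _ fun j _ => (monic_X_sub_C _).pow _
  have hP0 : P ≠ 0 := hPm.ne_zero
  have hPsplits : P.Splits := by
    rw [hP]; exact Splits.prod fun j _ => (Splits.X_sub_C _).pow _
  have hProots : P.roots = Finset.univ.val.bind fun j : Fin r => (α j) • {a j} := by
    rw [hP, roots_prod _ _ (hP ▸ hP0)]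
    simp only [roots_pow, roots_X_sub_C]
  have hrmP : ∀ x, P.rootMultiplicity x = ∑ j : Fin r, α j * (if x = a j then 1 else 0) := by
    intro x
    rw [← count_roots, hProots, Multiset.count_bind]
    simp only [Multiset.count_nsmul, Multiset.count_singleton]
    rfl
  -- integer lift
  have hlift : P ∈ lifts (Int.castRingHom ℝ) := by
    refine (lifts_iff_coeff_lifts _).mpr fun n => ?_
    obtain ⟨z, hz⟩ := hint n
    exact ⟨z, by simpa using hz.symm⟩
  obtain ⟨p0, hp0map, -, hp0monic⟩ := lifts_and_degree_eq_and_monic hlift hPm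
  set φ : ℚ →+* ℝ := algebraMap ℚ ℝ with hφ
  set pq : ℚ[X] := p0.map (algebraMap ℤ ℚ) with hpq
  have hcomp : (Int.castRingHom ℝ) = φ.comp (algebraMap ℤ ℚ) := Subsingleton.elim _ _
  have hPq : pq.map φ = P := by
    rw [hpq, Polynomial.map_map, ← hcomp, hp0map]
  set gq := gcdChain pq d with hgq
  set gR := gcdChain P d with hgr
  have hgRmap : gq.map φ = gR := by rw [hgq, gcdChain_map, hPq]
  have hgR0 : gR ≠ 0 := gcdChain_ne_zero hP0 d
  have hgq0 : gq ≠ 0 := by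
    intro h; rw [h, Polynomial.map_zero] at hgRmap; exact hgR0 hgRmap.symm
  have hrmgR : ∀ x, gR.rootMultiplicity x = P.rootMultiplicity x - d := fun x => rmChain hP0 x d
  -- W monic version of gR
  set W : Polynomial ℝ := gR * C gR.leadingCoeff⁻¹ with hW
  have hWm : W.Monic := monic_mul_leadingCoeff_inv hgR0
  have hW0 : W ≠ 0 := hWm.ne_zero
  have hWdvdgR : W ∣ gR :=
    ⟨C gR.leadingCoeff, by
      rw [hW, mul_assoc, ← C_mul, inv_mul_cancel₀ (leadingCoeff_ne_zero.mpr hgR0), C_1, mul_one]⟩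
  have hWdvdP : W ∣ P := hWdvdgR.trans (gcdChain_dvd P d)
  have hWsplits : W.Splits := hPsplits.of_dvd hP0 hWdvdP
  have hrmW : ∀ x, W.rootMultiplicity x = P.rootMultiplicity x - d := by
    intro x
    rw [hW, rootMultiplicity_mul (hW ▸ hW0), rootMultiplicity_C, add_zero, hrmgR]
  -- T
  set T : Polynomial ℝ :=
    ∏ j ∈ Finset.univ.filter (fun j : Fin r => j.1 < k), (X - C (a j)) with hT
  have hTm : T.Monic := monic_prod_of_monic _ _ fun j _ => monic_X_sub_C _
  have hT0 : T ≠ 0 := hTm.ne_zero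
  have hTsplits : T.Splits := Splits.prod fun j _ => Splits.X_sub_C _
  have hrmT : ∀ x, T.rootMultiplicity x
      = ∑ j ∈ Finset.univ.filter (fun j : Fin r => j.1 < k), (if x = a j then 1 else 0) := by
    intro x
    rw [← count_roots, hT, roots_prod _ _ (hT ▸ hT0), Multiset.count_bind]
    simp only [roots_X_sub_C, Multiset.count_singleton]
    rfl
  -- W = T
  have hWT : W = T := by
    rw [hWsplits.eq_prod_roots_of_monic hWm,
        hTsplits.eq_prod_roots_of_monic hTm]
    congr 1
    refine congrArg _ (Multiset.ext.mpr fun x => ?_)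
    rw [count_roots, count_roots, hrmW x, hrmT x, hrmP x]
    by_cases hx : ∃ j, x = a j
    · obtain ⟨i0, rfl⟩ := hx
      have h1 : ∑ j : Fin r, α j * (if a i0 = a j then 1 else 0) = α i0 := by
        rw [Finset.sum_eq_single i0]
        · simp
        · intro j _ hj
          rw [if_neg fun h => hj (ha h).symm, mul_zero]
        · simp
      have h2 : ∀ j : Fin r, (if a i0 = a j then (1:ℕ) else 0) = if i0 = j then 1 else 0 := by
        intro j; simp only [ha.eq_iff]
      rw [h1, Finset.sum_congr rfl fun j _ => h2 j,
        Finset.sum_ite_eq _ i0 (fun _ => (1:ℕ))]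
      by_cases hik : i0.1 < k
      · rw [if_pos (by simp [hik])]
        have := heq i0 hik; omega
      · rw [if_neg (by simp [hik])]
        have := hgt i0 (le_of_not_gt hik); omega
    · push_neg at hx
      have h1 : ∑ j : Fin r, α j * (if x = a j then 1 else 0) = 0 := by
        apply Finset.sum_eq_zero; intro j _; rw [if_neg (hx j), mul_zero]
      have h2 : ∑ j ∈ Finset.univ.filter (fun j : Fin r => j.1 < k),
          (if x = a j then (1:ℕ) else 0) = 0 := by
        apply Finset.sum_eq_zero; intro j _; rw [if_neg (hx j)]
      omega
  -- rationality
  have hlc : φ gq.leadingCoeff = gR.leadingCoeff := by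
    rw [← hgRmap, leadingCoeff_map]
  set Wq : Polynomial ℚ := gq * C gq.leadingCoeff⁻¹ with hWq
  have hWqmap : Wq.map φ = W := by
    rw [hWq, Polynomial.map_mul, map_C, map_inv₀, hlc, hgRmap, hW]
  have hWqm : Wq.Monic := monic_mul_leadingCoeff_inv hgq0
  have hWqdvd : Wq ∣ pq := by
    refine Dvd.dvd.trans ?_ (gcdChain_dvd pq d)
    exact ⟨C gq.leadingCoeff, by
      rw [hWq, mul_assoc, ← C_mul, inv_mul_cancel₀ (leadingCoeff_ne_zero.mpr hgq0), C_1, mul_one]⟩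
  obtain ⟨g', hg'⟩ := IsIntegrallyClosed.eq_map_mul_C_of_dvd (K := ℚ) hp0monic (hpq ▸ hWqdvd)
  have hg'' : g'.map (algebraMap ℤ ℚ) = Wq := by
    rw [← hg', hWqm.leadingCoeff, C_1, mul_one]
  refine ⟨g'.coeff i, ?_⟩
  have hTg : T = g'.map (Int.castRingHom ℝ) := by
    rw [← hWT, ← hWqmap, ← hg'', Polynomial.map_map, ← hcomp]
  rw [hTg, coeff_map]
  simp
end

section
/- Let S be a symmetric Seidel matrix of order n. Then det(S) ≡ 1 - n (mod 4). -/
open Matrix Polynomial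

section helpers

lemma even_sum_symm_zero_diag {n : ℕ} (g : Fin n → Fin n → ℤ)
    (hs : ∀ i j, g i j = g j i) (hd : ∀ i, g i i = 0) :
    Even (∑ i, ∑ j, g i j) := by
  have h1 : ∀ i j : Fin n,
      g i j = (if i < j then g i j else 0) + (if j < i then g i j else 0) := by
    intro i j
    rcases lt_trichotomy i j with h | h | h
    · simp [h, asymm h]
    · simp [h, hd]
    · simp [h, asymm h]
  have h2 : ∑ i, ∑ j, g i j
      = (∑ i, ∑ j, if i < j then g i j else 0)
        + (∑ i, ∑ j, if j < i then g i j else 0) := by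
    rw [← Finset.sum_add_distrib]
    refine Finset.sum_congr rfl fun i _ => ?_
    rw [← Finset.sum_add_distrib]
    exact Finset.sum_congr rfl fun j _ => h1 i j
  have h3 : (∑ i, ∑ j, if j < i then g i j else 0)
      = ∑ i, ∑ j, if i < j then g i j else 0 := by
    rw [Finset.sum_comm]
    refine Finset.sum_congr rfl fun i _ => Finset.sum_congr rfl fun j _ => ?_
    by_cases h : i < j <;> simp [h, hs i j]
  rw [h2, h3]
  exact ⟨_, rfl⟩

end helpers


theorem stmt8 {n : ℕ} (S : Matrix (Fin n) (Fin n) ℤ) (hsymm : S.IsSymm)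
    (hdiag : ∀ i, S i i = 0) (hoff : ∀ i j, i ≠ j → S i j = 1 ∨ S i j = -1) :
    S.det ≡ 1 - (n : ℤ) [ZMOD 4] := by
  classical
  set M : Matrix (Fin n) (Fin n) ℤ := Matrix.of (fun i j => if i = j then 0 else 1) with hMdef
  set A : Matrix (Fin n) (Fin n) ℤ := Matrix.of (fun i j => if S i j = -1 then 1 else 0) with hAdef
  have hMsymm : Mᵀ = M := by
    ext i j
    simp only [hMdef, transpose_apply, of_apply, eq_comm]
  have hAsymm : ∀ i j, A i j = A j i := by
    intro i j
    have : S j i = S i j := congrFun (congrFun hsymm i) j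
    simp [hAdef, this]
  have hAdiag : ∀ i, A i i = 0 := by
    intro i
    simp [hAdef, hdiag i]
  -- decomposition S = (-2) • A + M
  have hS : (fun i => S i) = (fun i => (-2 : ℤ) • A i) + (fun i => M i) := by
    funext i
    funext j
    by_cases h : i = j
    · subst h; simp [hMdef, hAdef, hdiag i]
    · rcases hoff i j h with h1 | h1 <;> simp [hMdef, hAdef, h, h1]
  -- multilinear expansion of the determinant
  have hdet : S.det = ∑ s : Finset (Fin n),
      (-2 : ℤ) ^ s.card * (Matrix.of (s.piecewise A M)).det := by
    have h0 : S.det = (Matrix.detRowAlternating : (Fin n → ℤ) [⋀^Fin n]→ₗ[ℤ] ℤ)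
        ((fun i => (-2 : ℤ) • A i) + (fun i => M i)) := by
      rw [← hS]; rfl
    rw [h0]
    refine ((Matrix.detRowAlternating :
      (Fin n → ℤ) [⋀^Fin n]→ₗ[ℤ] ℤ).toMultilinearMap.map_add_univ _ _).trans ?_
    refine Finset.sum_congr rfl fun s _ => ?_
    have hrw : (s.piecewise (fun i => (-2 : ℤ) • A i) (fun i => M i))
        = s.piecewise (fun i => (-2 : ℤ) • (s.piecewise A M) i) (s.piecewise A M) := by
      funext i
      by_cases h : i ∈ s
      · simp [Finset.piecewise_eq_of_mem _ _ _ h, Finset.piecewise, h]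
      · simp [Finset.piecewise_eq_of_notMem _ _ _ h, Finset.piecewise, h]
    rw [hrw, (Matrix.detRowAlternating :
      (Fin n → ℤ) [⋀^Fin n]→ₗ[ℤ] ℤ).toMultilinearMap.map_piecewise_smul
        (fun _ => (-2 : ℤ)) (s.piecewise A M) s]
    simp only [Finset.prod_const, smul_eq_mul]
    rfl
  -- split the sum modulo 4
  have hsplit : S.det = (∑ s ∈ Finset.univ.filter (fun s : Finset (Fin n) => s.card ≤ 1),
        (-2 : ℤ) ^ s.card * (Matrix.of (s.piecewise A M)).det)
      + ∑ s ∈ Finset.univ.filter (fun s : Finset (Fin n) => ¬ s.card ≤ 1),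
        (-2 : ℤ) ^ s.card * (Matrix.of (s.piecewise A M)).det := by
    rw [hdet, Finset.sum_filter_add_sum_filter_not]
  have hbig : (4 : ℤ) ∣ ∑ s ∈ Finset.univ.filter (fun s : Finset (Fin n) => ¬ s.card ≤ 1),
      (-2 : ℤ) ^ s.card * (Matrix.of (s.piecewise A M)).det := by
    refine Finset.dvd_sum fun s hs => ?_
    have hc : 2 ≤ s.card := by
      have := (Finset.mem_filter.mp hs).2
      omega
    obtain ⟨c, hc'⟩ : ∃ c, s.card = 2 + c := ⟨s.card - 2, by omega⟩
    refine Dvd.dvd.mul_right ?_ _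
    rw [hc', pow_add]
    exact Dvd.dvd.mul_right (by norm_num) _
  -- the small-cardinality part
  have hfilter : Finset.univ.filter (fun s : Finset (Fin n) => s.card ≤ 1)
      = insert (∅ : Finset (Fin n)) (Finset.univ.image (fun k : Fin n => {k})) := by
    ext s
    constructor
    · intro hs
      have h := (Finset.mem_filter.mp hs).2
      rcases Nat.le_one_iff_eq_zero_or_eq_one.mp h with h0 | h0
      · rw [Finset.card_eq_zero.mp h0]; simp
      · obtain ⟨a, rfl⟩ := Finset.card_eq_one.mp h0
        exact Finset.mem_insert_of_mem (Finset.mem_image_of_mem _ (Finset.mem_univ a))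
    · intro hs
      rcases Finset.mem_insert.mp hs with rfl | hs
      · simp
      · obtain ⟨a, -, rfl⟩ := Finset.mem_image.mp hs
        simp
  have hempty : (∅ : Finset (Fin n)) ∉ Finset.univ.image (fun k : Fin n => ({k} : Finset (Fin n))) := by
    simp
  have hsmall : (∑ s ∈ Finset.univ.filter (fun s : Finset (Fin n) => s.card ≤ 1),
        (-2 : ℤ) ^ s.card * (Matrix.of (s.piecewise A M)).det)
      = M.det + ∑ k : Fin n, (-2 : ℤ) * (M.updateRow k (A k)).det := by
    rw [hfilter, Finset.sum_insert hempty,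
      Finset.sum_image (by intro a _ b _ h; exact Finset.singleton_injective h)]
    congr 1
    · rw [Finset.card_empty, pow_zero, one_mul]; congr 1
    · refine Finset.sum_congr rfl fun k _ => ?_
      rw [Finset.card_singleton, pow_one]
      congr 2
      funext i
      funext j; by_cases h : i = k <;> simp [Finset.piecewise, h]
  -- rewrite each updateRow determinant via the adjugate
  have hupd : ∀ k, (M.updateRow k (A k)).det = ∑ j, A k j * adjugate M j k := by
    intro k
    rw [Matrix.det_eq_sum_mul_adjugate_row _ k]
    refine Finset.sum_congr rfl fun j _ => ?_
    rw [Matrix.updateRow_self]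
    congr 1
    rw [Matrix.adjugate_apply, Matrix.adjugate_apply]
    congr 1
    ext i x
    by_cases h : i = k
    · subst h; simp
    · simp [Matrix.updateRow_ne h, Function.update_of_ne h]
  -- the sum of the correction terms is even
  have hAdjsymm : ∀ i j, adjugate M i j = adjugate M j i := by
    intro i j
    have := Matrix.adjugate_transpose M
    rw [hMsymm] at this
    exact congrFun (congrFun this j) i
  have heven : Even (∑ k : Fin n, (M.updateRow k (A k)).det) := by
    have : (∑ k : Fin n, (M.updateRow k (A k)).det)
        = ∑ k, ∑ j, A k j * adjugate M j k := by
      exact Finset.sum_congr rfl fun k _ => hupd k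
    rw [this]
    refine even_sum_symm_zero_diag _ ?_ ?_
    · intro i j
      rw [hAsymm i j, hAdjsymm j i]
    · intro i
      simp [hAdiag i]
  -- compute det M
  have hMval : M.det = (-1 : ℤ) ^ n * (1 - (n : ℤ)) := by
    have hMeq : M = -(1 + Matrix.replicateCol (Fin 1) (fun _ => (-1 : ℤ))
        * Matrix.replicateRow (Fin 1) (fun _ => (1 : ℤ))) := by
      ext i j
      by_cases h : i = j
      · subst h
        simp [hMdef, Matrix.mul_apply, Matrix.one_apply]
      · simp [hMdef, h, Matrix.mul_apply, Matrix.one_apply, Ne.symm h]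
    have hd : (1 + Matrix.replicateCol (Fin 1) (fun _ : Fin n => (-1 : ℤ))
        * Matrix.replicateRow (Fin 1) (fun _ : Fin n => (1 : ℤ))).det
        = 1 + (fun _ : Fin n => (1 : ℤ)) ⬝ᵥ (fun _ : Fin n => (-1 : ℤ)) :=
      Matrix.det_one_add_replicateCol_mul_replicateRow _ _
    rw [hMeq, Matrix.det_neg, hd]
    simp [dotProduct, Finset.sum_const, Finset.card_univ, sub_eq_add_neg]
  -- put everything together
  obtain ⟨u, hu⟩ := heven
  obtain ⟨r, hr⟩ := hbig
  have hsum2 : (∑ k : Fin n, (-2 : ℤ) * (M.updateRow k (A k)).det)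
      = (-2 : ℤ) * (u + u) := by
    rw [← Finset.mul_sum, hu]
  have hfinal : S.det = (-1 : ℤ) ^ n * (1 - (n : ℤ)) + (-4) * u + 4 * r := by
    rw [hsplit, hsmall, hMval, hsum2, hr]; ring
  rw [Int.ModEq] at *
  rcases Nat.even_or_odd n with he | ho
  · have : (-1 : ℤ) ^ n = 1 := Even.neg_one_pow he
    rw [hfinal, this]
    conv_rhs => rw [show (1 - (n : ℤ)) = 1 * (1 - (n : ℤ)) + (-4) * u + 4 * r - ((-4) * u + 4 * r) by ring]
    omega
  · have h1 : (-1 : ℤ) ^ n = -1 := Odd.neg_one_pow ho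
    obtain ⟨m, hm⟩ := ho
    rw [hfinal, h1]
    have hn : (n : ℤ) = 2 * m + 1 := by exact_mod_cast hm
    rw [hn]
    ring_nf
    omega
end

section
/- Let S be a symmetric Seidel matrix of order n = 4k-1 with k ≥ 3 whose characteristic polynomial is (x-α)(x-β)(x-γ)(x² - ρ²)^{2(k-1)} with |α|, |β|, |γ| < ρ. Then ρ² ≠ 4k - 1. -/
open Matrix Polynomial

section Aux

lemma charpoly_conj_helper {N : ℕ} (V D : Matrix (Fin N) (Fin N) ℝ) (h1 : V * star V = 1)
    (h2 : star V * V = 1) : (V * D * star V).charpoly = D.charpoly := by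
  have hc : (C : ℝ →+* ℝ[X]).mapMatrix V * (C : ℝ →+* ℝ[X]).mapMatrix (star V) = 1 := by
    rw [← _root_.map_mul, h1, _root_.map_one]
  have hc2 : (C : ℝ →+* ℝ[X]).mapMatrix (star V) * (C : ℝ →+* ℝ[X]).mapMatrix V = 1 := by
    rw [← _root_.map_mul, h2, _root_.map_one]
  have key : charmatrix (V * D * star V)
      = (C : ℝ →+* ℝ[X]).mapMatrix V * charmatrix D * (C : ℝ →+* ℝ[X]).mapMatrix (star V) := by
    rw [charmatrix, charmatrix]
    rw [mul_sub, sub_mul]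
    congr 1
    · rw [mul_assoc, (Matrix.scalar_commute (X : ℝ[X]) (Commute.all _) _).eq, ← mul_assoc, hc,
        one_mul]
    · simp [_root_.map_mul]
  rw [Matrix.charpoly, Matrix.charpoly, key, det_mul, det_mul, mul_comm, ← mul_assoc, ← det_mul,
    hc2, det_one, one_mul]

lemma conj_pow_eq {N : ℕ} (V D : Matrix (Fin N) (Fin N) ℝ) (h1 : V * star V = 1)
    (h2 : star V * V = 1) (p : ℕ) : (V * D * star V) ^ p = V * D ^ p * star V := by
  induction p with
  | zero => simp [h1]
  | succ p ih =>
      rw [pow_succ, ih]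
      have : V * D ^ p * star V * (V * D * star V)
          = V * (D ^ p * (star V * V) * D) * star V := by noncomm_ring
      rw [this, h2]
      noncomm_ring

/-- eigen decomposition package: eigenvalues give the charpoly factorization and traces
of powers. -/
lemma exists_eig {N : ℕ} (S : Matrix (Fin N) (Fin N) ℝ) (hsym : S.IsSymm) :
    ∃ μ : Fin N → ℝ, S.charpoly = ∏ i, (X - C (μ i)) ∧ ∀ p, (S ^ p).trace = ∑ i, μ i ^ p := by
  have hH : S.IsHermitian := by rwa [Matrix.IsHermitian, conjTranspose_eq_transpose_of_trivial]
  set V : Matrix (Fin N) (Fin N) ℝ := (hH.eigenvectorUnitary : Matrix (Fin N) (Fin N) ℝ) with hV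
  have h1 : V * star V = 1 := mem_unitaryGroup_iff.mp hH.eigenvectorUnitary.2
  have h2 : star V * V = 1 := mem_unitaryGroup_iff'.mp hH.eigenvectorUnitary.2
  have hst : S = V * diagonal hH.eigenvalues * star V := by
    have := hH.spectral_theorem
    simpa using this
  refine ⟨hH.eigenvalues, ?_, ?_⟩
  · calc S.charpoly = (V * diagonal hH.eigenvalues * star V).charpoly := by rw [← hst]
      _ = (diagonal hH.eigenvalues).charpoly := charpoly_conj_helper V _ h1 h2
      _ = ∏ i, (X - C (hH.eigenvalues i)) := by
          rw [Matrix.charpoly_of_upperTriangular _ (Matrix.blockTriangular_diagonal _)]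
          simp
  · intro p
    rw [show S ^ p = (V * diagonal hH.eigenvalues * star V) ^ p from by rw [← hst],
      conj_pow_eq V _ h1 h2, Matrix.trace_mul_cycle, h2, one_mul, diagonal_pow, trace_diagonal]
    simp

lemma roots_multiset_eq {N : ℕ} (μ : Fin N → ℝ) (s : Multiset ℝ)
    (h : ∏ i, (X - C (μ i)) = (s.map fun a => X - C a).prod) :
    Multiset.map μ Finset.univ.val = s := by
  have h2 : ((Multiset.map μ Finset.univ.val).map fun a => X - C a).prod
      = (s.map fun a => X - C a).prod := by
    rw [Multiset.map_map]; exact h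
  have := congrArg Polynomial.roots h2
  rwa [Polynomial.roots_multiset_prod_X_sub_C, Polynomial.roots_multiset_prod_X_sub_C] at this

lemma special_multiset_sum (α β γ ρ : ℝ) (m : ℕ) (g : ℝ → ℝ) :
    ((α ::ₘ β ::ₘ γ ::ₘ m • (ρ ::ₘ {-ρ})).map g).sum
      = g α + g β + g γ + m * (g ρ + g (-ρ)) := by
  simp [Multiset.map_cons, Multiset.sum_cons, Multiset.map_nsmul, Multiset.sum_nsmul,
    nsmul_eq_mul]
  ring

lemma special_multiset_prod (α β γ ρ : ℝ) (m : ℕ) :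
    ((α ::ₘ β ::ₘ γ ::ₘ m • (ρ ::ₘ {-ρ})).map fun a => X - C a).prod
      = (X - C α) * (X - C β) * (X - C γ) * (X ^ 2 - C (ρ ^ 2)) ^ m := by
  simp [Multiset.map_cons, Multiset.map_nsmul, Multiset.prod_cons, Multiset.prod_nsmul,
    map_pow, map_neg]
  ring

/-- off-diagonal entries of the square of a Seidel matrix of odd order are odd integers,
hence have square at least 1. -/
lemma seidel_sq_offdiag {N : ℕ} (hN : Odd N) (S : Matrix (Fin N) (Fin N) ℝ)
    (hdiag : ∀ i, S i i = 0) (hoff : ∀ i j, i ≠ j → S i j = 1 ∨ S i j = -1)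
    {i j : Fin N} (hij : i ≠ j) : (1 : ℝ) ≤ ((S * S) i j) ^ 2 := by
  classical
  set T : Matrix (Fin N) (Fin N) ℤ :=
    Matrix.of (fun a b => if S a b = 1 then 1 else if S a b = -1 then -1 else 0) with hT
  have hmap : ∀ a b, ((T a b : ℤ) : ℝ) = S a b := by
    intro a b
    by_cases h : a = b
    · subst h; norm_num [hT, hdiag a]
    · rcases hoff a b h with h1 | h1 <;> norm_num [hT, h1]
  have hTdiag : ∀ a, T a a = 0 := by
    intro a; norm_num [hT, hdiag a]
  have hToff : ∀ a b, a ≠ b → T a b = 1 ∨ T a b = -1 := by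
    intro a b h
    rcases hoff a b h with h1 | h1 <;> norm_num [hT, h1]
  have hSS : (S * S) i j = (((T * T) i j : ℤ) : ℝ) := by
    rw [Matrix.mul_apply, Matrix.mul_apply]
    push_cast
    exact Finset.sum_congr rfl fun l _ => by rw [hmap, hmap]
  have hodd : (((T * T) i j : ℤ) : ZMod 2) = 1 := by
    rw [Matrix.mul_apply]
    push_cast
    have hterm : ∀ l : Fin N, ((T i l : ℤ) : ZMod 2) * ((T l j : ℤ) : ZMod 2)
        = if l = i ∨ l = j then 0 else 1 := by
      intro l
      by_cases hli : l = i
      · subst hli; simp [hTdiag l]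
      · by_cases hlj : l = j
        · subst hlj; simp [hTdiag l]
        · have h1 := hToff i l (fun h => hli h.symm)
          have h2 := hToff l j hlj
          have : ∀ x : ℤ, x = 1 ∨ x = -1 → ((x : ZMod 2) = 1) := by
            rintro x (rfl | rfl) <;> decide
          rw [if_neg (by tauto)]
          rw [this _ h1, this _ h2, one_mul]
    rw [Finset.sum_congr rfl fun l _ => hterm l]
    have hfun : (fun l : Fin N => if l = i ∨ l = j then (0 : ZMod 2) else 1)
        = fun l => 1 - (if l ∈ ({i, j} : Finset (Fin N)) then 1 else 0) := by
      funext l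
      by_cases h : l = i ∨ l = j <;>
        simp [h, Finset.mem_insert, Finset.mem_singleton]
    rw [hfun, Finset.sum_sub_distrib, Finset.sum_const, Finset.sum_ite_mem,
      Finset.univ_inter, Finset.sum_const, Finset.card_univ, Fintype.card_fin,
      Finset.card_insert_of_notMem (by simp [hij]), Finset.card_singleton]
    obtain ⟨c, hc⟩ := hN
    subst hc
    simp only [nsmul_eq_mul, mul_one]
    push_cast
    rw [show (2 : ZMod 2) = 0 by decide]
    ring
  have hne : (T * T) i j ≠ 0 := by
    intro h0
    rw [h0] at hodd
    simp at hodd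
  have habs : (1 : ℤ) ≤ ((T * T) i j) ^ 2 := by
    have h1 := Int.one_le_abs (by simpa using hne)
    calc (1 : ℤ) = 1 * 1 := by ring
      _ ≤ |(T * T) i j| * |(T * T) i j| := mul_le_mul h1 h1 (by norm_num) (by positivity)
      _ = ((T * T) i j) ^ 2 := by rw [← abs_mul, abs_mul_self]; ring
  rw [hSS]
  exact_mod_cast by exact_mod_cast (by exact_mod_cast habs : (1 : ℝ) ≤ (((T * T) i j) ^ 2 : ℤ))

end Aux

lemma final_ineq (a b c m : ℝ) (ha : 0 ≤ a) (hb : 0 ≤ b) (hc : 0 ≤ c)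
    (ham : a < m) (hbm : b < m) (hcm : c < m) (hsum : a + b + c = 2 * m)
    (hsq : 2 * m ^ 2 ≤ a ^ 2 + b ^ 2 + c ^ 2) : False := by
  nlinarith [mul_pos (sub_pos.mpr ham) (sub_pos.mpr hbm),
    mul_pos (sub_pos.mpr hbm) (sub_pos.mpr hcm),
    mul_pos (sub_pos.mpr ham) (sub_pos.mpr hcm)]


theorem stmt14 {k : ℕ} (hk : 3 ≤ k)
    (S : Matrix (Fin (4 * k - 1)) (Fin (4 * k - 1)) ℝ) (hS : IsSeidel S)
    (α β γ ρ : ℝ) (hα : |α| < ρ) (hβ : |β| < ρ) (hγ : |γ| < ρ)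
    (hchar : S.charpoly =
      (X - C α) * (X - C β) * (X - C γ) * (X ^ 2 - C (ρ ^ 2)) ^ (2 * (k - 1))) :
    ρ ^ 2 ≠ 4 * (k : ℝ) - 1 := by
  obtain ⟨hsym, hdiag, hoff⟩ := hS
  intro hm
  -- notation
  set nn : ℝ := ((4 * k - 1 : ℕ) : ℝ) with hnn
  have hnnval : nn = 4 * (k : ℝ) - 1 := by
    rw [hnn]
    have h1 : (1:ℕ) ≤ 4 * k := by omega
    push_cast [Nat.cast_sub h1]
    ring
  have hmval : ((2 * (k - 1) : ℕ) : ℝ) = 2 * (k : ℝ) - 2 := by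
    have h1 : (1:ℕ) ≤ k := by omega
    push_cast [Nat.cast_sub h1]
    ring
  -- eigenvalues and power sums
  obtain ⟨μ, hcp, htr⟩ := exists_eig S hsym
  have hprod : ∏ i, (X - C (μ i))
      = ((α ::ₘ β ::ₘ γ ::ₘ (2 * (k - 1)) • (ρ ::ₘ {-ρ})).map fun a => X - C a).prod :=
    hcp.symm.trans (hchar.trans (special_multiset_prod α β γ ρ (2 * (k - 1))).symm)
  have hmult := roots_multiset_eq μ _ hprod
  have hp : ∀ p : ℕ, (S ^ p).trace
      = α ^ p + β ^ p + γ ^ p + ((2 * (k - 1) : ℕ) : ℝ) * (ρ ^ p + (-ρ) ^ p) := by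
    intro p
    rw [htr p]
    have h1 : ∑ i, μ i ^ p = ((Multiset.map μ Finset.univ.val).map fun x => x ^ p).sum := by
      rw [Multiset.map_map]
      rfl
    rw [h1, hmult, special_multiset_sum]
  -- entrywise diagonal of S*S
  have hsq : ∀ i j, S i j * S j i = if i = j then (0:ℝ) else 1 := by
    intro i j
    by_cases h : i = j
    · simp [h, hdiag j]
    · have h2 := hsym.apply i j
      rcases hoff i j h with h1 | h1 <;> simp [h, h1, h2]
  have hdd : ∀ i, (S * S) i i = nn - 1 := by
    intro i
    rw [Matrix.mul_apply]
    rw [Finset.sum_congr rfl fun j _ => hsq i j]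
    have h1 : (fun j : Fin (4*k-1) => if i = j then (0:ℝ) else 1)
        = fun j => 1 - if i = j then (1:ℝ) else 0 := by
      funext j; by_cases h : i = j <;> simp [h]
    rw [h1, Finset.sum_sub_distrib, Finset.sum_const, Finset.card_univ, Fintype.card_fin,
      Finset.sum_ite_eq, if_pos (Finset.mem_univ i)]
    simp [hnn]
  -- trace of S^2 entrywise
  have t2 : (S ^ 2).trace = nn * (nn - 1) := by
    rw [sq, Matrix.trace]
    rw [Finset.sum_congr rfl fun i _ => show (S * S).diag i = _ from hdd i]
    rw [Finset.sum_const, Finset.card_univ, Fintype.card_fin, nsmul_eq_mul]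
  -- symmetry of S*S
  have symm2 : (S * S).IsSymm := by
    rw [Matrix.IsSymm, Matrix.transpose_mul, hsym.eq]
  -- cast helper
  have hcast2 : ((4 * k - 1 - 1 : ℕ) : ℝ) = nn - 1 := by
    rw [hnnval]
    have h1 : 4 * k - 1 - 1 = 4 * (k - 1) + 2 := by omega
    have h2 : (1:ℕ) ≤ k := by omega
    rw [h1]
    push_cast [Nat.cast_sub h2]
    ring
  -- trace of S^4 lower bound
  have hodd : Odd (4 * k - 1) := ⟨2 * k - 1, by omega⟩
  have t4 : nn * ((nn - 1) ^ 2 + (nn - 1)) ≤ (S ^ 4).trace := by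
    have hdiag4 : ∀ i : Fin (4 * k - 1),
        (nn - 1) ^ 2 + (nn - 1) ≤ ((S * S) * (S * S)) i i := by
      intro i
      rw [Matrix.mul_apply]
      have hsq2 : ∀ j, (S * S) i j * (S * S) j i = ((S * S) i j) ^ 2 := by
        intro j
        rw [symm2.apply i j]
        ring
      rw [Finset.sum_congr rfl fun j _ => hsq2 j]
      rw [← Finset.add_sum_erase _ _ (Finset.mem_univ i)]
      have hb1 : ((S * S) i i) ^ 2 = (nn - 1) ^ 2 := by rw [hdd i]
      have hb2 : nn - 1 ≤ ∑ j ∈ Finset.univ.erase i, ((S * S) i j) ^ 2 := by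
        have hcard : (Finset.univ.erase i).card = 4 * k - 1 - 1 := by
          rw [Finset.card_erase_of_mem (Finset.mem_univ i), Finset.card_univ, Fintype.card_fin]
        have hle : ∀ j ∈ Finset.univ.erase i, (1:ℝ) ≤ ((S * S) i j) ^ 2 := by
          intro j hj
          have hij : i ≠ j := fun h => (Finset.mem_erase.mp hj).1 h.symm
          exact seidel_sq_offdiag hodd S hdiag hoff hij
        calc nn - 1 = ((4 * k - 1 - 1 : ℕ) : ℝ) := hcast2.symm
          _ = (Finset.univ.erase i).card • (1:ℝ) := by rw [hcard]; simp
          _ ≤ ∑ j ∈ Finset.univ.erase i, ((S * S) i j) ^ 2 :=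
              Finset.card_nsmul_le_sum _ _ _ hle
      rw [hb1]
      linarith
    calc nn * ((nn - 1) ^ 2 + (nn - 1))
        = ∑ _i : Fin (4 * k - 1), ((nn - 1) ^ 2 + (nn - 1)) := by
          rw [Finset.sum_const, Finset.card_univ, Fintype.card_fin, nsmul_eq_mul, hnn]
      _ ≤ ∑ i, ((S * S) * (S * S)) i i := Finset.sum_le_sum fun i _ => hdiag4 i
      _ = (S ^ 4).trace := by
          rw [show S * S * (S * S) = S ^ 4 by noncomm_ring, Matrix.trace]
          rfl
  -- combine
  have h2eq : α ^ 2 + β ^ 2 + γ ^ 2 + (2 * (k:ℝ) - 2) * (2 * ρ ^ 2) = nn * (nn - 1) := by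
    have h := (hp 2).symm.trans t2
    rw [hmval] at h
    linear_combination h
  have h4ge : nn * ((nn - 1) ^ 2 + (nn - 1))
      ≤ α ^ 4 + β ^ 4 + γ ^ 4 + (2 * (k:ℝ) - 2) * (2 * ρ ^ 4) := by
    have h := t4
    rw [hp 4, hmval] at h
    calc nn * ((nn - 1) ^ 2 + (nn - 1))
        ≤ α ^ 4 + β ^ 4 + γ ^ 4 + (2 * (k:ℝ) - 2) * (ρ ^ 4 + (-ρ) ^ 4) := h
      _ = α ^ 4 + β ^ 4 + γ ^ 4 + (2 * (k:ℝ) - 2) * (2 * ρ ^ 4) := by ring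
  have hα2 : α ^ 2 < ρ ^ 2 := by nlinarith [sq_abs α, abs_nonneg α]
  have hβ2 : β ^ 2 < ρ ^ 2 := by nlinarith [sq_abs β, abs_nonneg β]
  have hγ2 : γ ^ 2 < ρ ^ 2 := by nlinarith [sq_abs γ, abs_nonneg γ]
  have hρ4 : ρ ^ 4 = (4 * (k:ℝ) - 1) ^ 2 := by
    rw [show ρ ^ 4 = (ρ ^ 2) ^ 2 by ring, hm]
  have hsum : α ^ 2 + β ^ 2 + γ ^ 2 = 2 * (4 * (k:ℝ) - 1) := by
    have e : nn * (nn - 1) - (2 * (k:ℝ) - 2) * (2 * ρ ^ 2) = 2 * (4 * (k:ℝ) - 1) := by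
      rw [hnnval, hm]; ring
    linarith [h2eq, e]
  have hsq4 : 2 * (4 * (k:ℝ) - 1) ^ 2 ≤ (α ^ 2) ^ 2 + (β ^ 2) ^ 2 + (γ ^ 2) ^ 2 := by
    have e : nn * ((nn - 1) ^ 2 + (nn - 1)) - (2 * (k:ℝ) - 2) * (2 * ρ ^ 4)
        = 2 * (4 * (k:ℝ) - 1) ^ 2 := by
      rw [hnnval, hρ4]; ring
    have e2 : α ^ 4 + β ^ 4 + γ ^ 4 = (α ^ 2) ^ 2 + (β ^ 2) ^ 2 + (γ ^ 2) ^ 2 := by ring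
    linarith [h4ge, e, e2]
  rw [hm] at hα2 hβ2 hγ2
  exact final_ineq (α ^ 2) (β ^ 2) (γ ^ 2) (4 * (k:ℝ) - 1) (sq_nonneg α) (sq_nonneg β)
    (sq_nonneg γ) hα2 hβ2 hγ2 hsum hsq4
end
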